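/- arXiv:1103.1610 — 2 statements merged into one kernel-verified Lean document; each statement's English description precedes it below -/
import Mathlib

section
/- Let p be a prime. A group G belongs to the class 𝒢(p) if and only if, for every finite abelian p-group M regarded as a trivial discrete Ĝ_p-module, the canonical map H^*(Ĝ_p, M) → H^*(G, M) induced by the pro-p completion map is an isomorphism in every degree. -/
/-!
Common definitions for formalizing "Cohomology and profinite topologies for solvable
groups of finite rank" (K. Lorensen).

Group cohomology is defined via inhomogeneous cochains.  The continuous cohomology of the
pro-`p` (resp. profinite) completion of `G` with coefficients in a finite discrete module is
the direct limit, over the normal subgroups `N` of finite `p`-power (resp. finite) index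
acting trivially on the module, of the cohomology of the quotients `G ⧸ N`; accordingly, the
statement that the completion map induces an isomorphism on cohomology is rendered as:
the canonical (inflation) maps from this directed system to `H^*(G, M)` are jointly
surjective, and any class of the system killed in `H^*(G, M)` is killed at a deeper level of
the system.
-/

open Function TensorProduct

universe u v

namespace GoodProfinite

variable {G H : Type u} {M : Type v}

/-- The multiplicative group structure on `AddAut A` (composition), as in the older Mathlib. -/
instance addAutGroup (A : Type v) [Add A] : Group (AddAut A) where
  mul g h := AddEquiv.trans h g
  one := AddEquiv.refl _
  inv := AddEquiv.symm
  mul_assoc _ _ _ := rfl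
  one_mul _ := rfl
  mul_one _ := rfl
  inv_mul_cancel := AddEquiv.self_trans_symm

/-- The differential on inhomogeneous cochains of a group `G` with coefficients in a
`G`-module `M` (the action given by `ρ : G →* AddAut M`). -/
def cochainD [Group G] [AddCommGroup M] (ρ : G →* AddAut M) (n : ℕ) :
    ((Fin n → G) → M) →+ ((Fin (n + 1) → G) → M) :=
  AddMonoidHom.mk'
    (fun f g =>
      ρ (g 0) (f fun i => g i.succ) +
        ∑ j : Fin (n + 1), (-1 : ℤ) ^ ((j : ℕ) + 1) • f (Fin.contractNth j (· * ·) g))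
    (by
      intro a b
      funext g
      simp only [Pi.add_apply, map_add, smul_add, Finset.sum_add_distrib]
      abel)

/-- The `n`-cocycles. -/
def cocycleGroup [Group G] [AddCommGroup M] (ρ : G →* AddAut M) (n : ℕ) :
    AddSubgroup ((Fin n → G) → M) :=
  (cochainD ρ n).ker

/-- The `n`-coboundaries. -/
def coboundaryGroup [Group G] [AddCommGroup M] (ρ : G →* AddAut M) :
    (n : ℕ) → AddSubgroup ((Fin n → G) → M)
  | 0 => ⊥
  | n + 1 => (cochainD ρ n).range

/-- The `n`-th group cohomology of `G` with coefficients in the `G`-module `M`. -/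
def groupCoh [Group G] [AddCommGroup M] (ρ : G →* AddAut M) (n : ℕ) : Type (max u v) :=
  cocycleGroup ρ n ⧸ (coboundaryGroup ρ n).addSubgroupOf (cocycleGroup ρ n)

instance [Group G] [AddCommGroup M] (ρ : G →* AddAut M) (n : ℕ) :
    AddCommGroup (groupCoh ρ n) :=
  inferInstanceAs (AddCommGroup (_ ⧸ _))

/-- Precomposition of cochains with a group homomorphism. -/
def precompCochain [Group G] [Group H] [AddCommGroup M] (f : G →* H) (n : ℕ) :
    ((Fin n → H) → M) →+ ((Fin n → G) → M) :=
  AddMonoidHom.mk' (fun c g => c fun i => f (g i)) (fun _ _ => rfl)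

lemma comp_contractNth [Group G] [Group H] (f : G →* H) {n : ℕ} (j : Fin (n + 1))
    (g : Fin (n + 1) → G) :
    (fun k => f (Fin.contractNth j (· * ·) g k)) =
      Fin.contractNth j (· * ·) fun i => f (g i) := by
  funext k
  unfold Fin.contractNth
  split_ifs <;> simp [map_mul]

lemma cochainD_precomp [Group G] [Group H] [AddCommGroup M] (f : G →* H)
    (ρ : H →* AddAut M) (ρ' : G →* AddAut M) (hcomp : ∀ g, ρ' g = ρ (f g)) (n : ℕ)
    (c : (Fin n → H) → M) :
    cochainD ρ' n (precompCochain f n c) = precompCochain f (n + 1) (cochainD ρ n c) := by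
  funext g
  show ρ' (g 0) (c fun i => f (g i.succ)) +
      ∑ j : Fin (n + 1), (-1 : ℤ) ^ ((j : ℕ) + 1) •
        c (fun i => f (Fin.contractNth j (· * ·) g i)) =
    ρ (f (g 0)) (c fun i => f (g i.succ)) +
      ∑ j : Fin (n + 1), (-1 : ℤ) ^ ((j : ℕ) + 1) •
        c (Fin.contractNth j (· * ·) fun i => f (g i))
  rw [hcomp]
  congr 1
  refine Finset.sum_congr rfl fun j _ => ?_
  rw [comp_contractNth]

/-- The map on cocycles induced by a group homomorphism with compatible actions. -/
def cocycleMap [Group G] [Group H] [AddCommGroup M] (f : G →* H) (ρ : H →* AddAut M)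
    (ρ' : G →* AddAut M) (hcomp : ∀ g, ρ' g = ρ (f g)) (n : ℕ) :
    cocycleGroup ρ n →+ cocycleGroup ρ' n :=
  AddMonoidHom.codRestrict ((precompCochain f n).comp (cocycleGroup ρ n).subtype) _
    (fun x => by
      have hx : cochainD ρ n x.1 = 0 := x.2
      show precompCochain f n x.1 ∈ (cochainD ρ' n).ker
      rw [AddMonoidHom.mem_ker, cochainD_precomp f ρ ρ' hcomp, hx, map_zero])

/-- The map `H^n(H, M) → H^n(G, M)` on group cohomology induced by a group homomorphism
`f : G →* H` and compatible actions (`ρ' = ρ ∘ f`); e.g. inflation maps. -/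
def cohMap [Group G] [Group H] [AddCommGroup M] (f : G →* H) (ρ : H →* AddAut M)
    (ρ' : G →* AddAut M) (hcomp : ∀ g, ρ' g = ρ (f g)) (n : ℕ) :
    groupCoh ρ n →+ groupCoh ρ' n :=
  QuotientAddGroup.map _ _ (cocycleMap f ρ ρ' hcomp n)
    (by
      intro x hx
      rw [AddSubgroup.mem_addSubgroupOf] at hx
      rw [AddSubgroup.mem_comap, AddSubgroup.mem_addSubgroupOf]
      match n, x, hx with
      | 0, x, hx =>
          have : x.1 = 0 := hx
          show (precompCochain f 0) x.1 ∈ (⊥ : AddSubgroup _)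
          rw [this, map_zero]
          exact AddSubgroup.mem_bot.mpr rfl
      | (m + 1), x, hx =>
          obtain ⟨b, hb⟩ := hx
          show (precompCochain f (m + 1)) x.1 ∈ (cochainD ρ' m).range
          exact ⟨precompCochain f m b, by rw [cochainD_precomp f ρ ρ' hcomp, hb]⟩)

/-- The action of `G ⧸ N` on `M` induced by an action of `G` on which `N` acts trivially. -/
def quotAut [Group G] [AddCommGroup M] (ρ : G →* AddAut M) (N : Subgroup G) [N.Normal]
    (h : ∀ x ∈ N, ρ x = 1) : G ⧸ N →* AddAut M :=
  QuotientGroup.lift N ρ h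

/-- The natural projection `G ⧸ N' →* G ⧸ N` when `N' ≤ N`. -/
def quotMapHom [Group G] (N N' : Subgroup G) [N.Normal] [N'.Normal] (hle : N' ≤ N) :
    G ⧸ N' →* G ⧸ N :=
  QuotientGroup.map N' N (MonoidHom.id G) fun _ hx => hle hx

lemma quotAut_comp_quotMap [Group G] [AddCommGroup M] (ρ : G →* AddAut M)
    (N N' : Subgroup G) [N.Normal] [N'.Normal] (hle : N' ≤ N) (h : ∀ x ∈ N, ρ x = 1) :
    ∀ x : G ⧸ N', quotAut ρ N' (fun g hg => h g (hle hg)) x =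
      quotAut ρ N h (quotMapHom N N' hle x) := fun x =>
  QuotientGroup.induction_on x fun _ => rfl

/-- The canonical map from the continuous cohomology of the pro-`p` completion of `G`
(the direct limit over normal subgroups of finite `p`-power index acting trivially on `M`
of the cohomology of the corresponding quotients) to `H^*(G, M)` is an isomorphism in
every degree. -/
def ProPCompletionCohIso (p : ℕ) (G : Type u) [Group G] (M : Type v) [AddCommGroup M]
    (ρ : G →* AddAut M) : Prop :=
  ∀ n : ℕ,
    (∀ x : groupCoh ρ n,
      ∃ (N : Subgroup G) (hN : N.Normal),
        haveI := hN
        ∃ (_ : ∃ k, N.index = p ^ k) (h1 : ∀ y ∈ N, ρ y = 1)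
          (z : groupCoh (quotAut ρ N h1) n),
          cohMap (QuotientGroup.mk' N) (quotAut ρ N h1) ρ (fun _ => rfl) n z = x) ∧
    (∀ (N : Subgroup G) (hN : N.Normal),
      haveI := hN
      ∀ (_ : ∃ k, N.index = p ^ k) (h1 : ∀ y ∈ N, ρ y = 1)
        (z : groupCoh (quotAut ρ N h1) n),
        cohMap (QuotientGroup.mk' N) (quotAut ρ N h1) ρ (fun _ => rfl) n z = 0 →
        ∃ (N' : Subgroup G) (hN' : N'.Normal),
          haveI := hN'
          ∃ (_ : ∃ k, N'.index = p ^ k) (hle : N' ≤ N),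
            cohMap (quotMapHom N N' hle) (quotAut ρ N h1)
              (quotAut ρ N' fun g hg => h1 g (hle hg))
              (quotAut_comp_quotMap ρ N N' hle h1) n z = 0)

/-- The analogue of `ProPCompletionCohIso` for the full profinite completion: the canonical
map from the continuous cohomology of the profinite completion of `G` to `H^*(G, M)` is an
isomorphism in every degree. -/
def ProfiniteCompletionCohIso (G : Type u) [Group G] (M : Type v) [AddCommGroup M]
    (ρ : G →* AddAut M) : Prop :=
  ∀ n : ℕ,
    (∀ x : groupCoh ρ n,
      ∃ (N : Subgroup G) (hN : N.Normal),
        haveI := hN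
        ∃ (_ : N.FiniteIndex) (h1 : ∀ y ∈ N, ρ y = 1)
          (z : groupCoh (quotAut ρ N h1) n),
          cohMap (QuotientGroup.mk' N) (quotAut ρ N h1) ρ (fun _ => rfl) n z = x) ∧
    (∀ (N : Subgroup G) (hN : N.Normal),
      haveI := hN
      ∀ (_ : N.FiniteIndex) (h1 : ∀ y ∈ N, ρ y = 1)
        (z : groupCoh (quotAut ρ N h1) n),
        cohMap (QuotientGroup.mk' N) (quotAut ρ N h1) ρ (fun _ => rfl) n z = 0 →
        ∃ (N' : Subgroup G) (hN' : N'.Normal),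
          haveI := hN'
          ∃ (_ : N'.FiniteIndex) (hle : N' ≤ N),
            cohMap (quotMapHom N N' hle) (quotAut ρ N h1)
              (quotAut ρ N' fun g hg => h1 g (hle hg))
              (quotAut_comp_quotMap ρ N N' hle h1) n z = 0)

/-- The class `𝒢(p)`: the pro-`p` completion map `G → Ĝ_p` induces an isomorphism
`H^*(Ĝ_p, M) → H^*(G, M)` for every discrete `Ĝ_p`-module `M` of finite `p`-power order,
i.e. for every `G`-module `M` of finite `p`-power order whose action factors through a
quotient of finite `p`-power index. -/
def InGp (p : ℕ) (G : Type u) [Group G] : Prop :=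
  ∀ (M : Type u) [AddCommGroup M] (ρ : G →* AddAut M),
    (∃ k, Nat.card M = p ^ k) →
    (∃ N : Subgroup G, N.Normal ∧ (∃ k, N.index = p ^ k) ∧ ∀ y ∈ N, ρ y = 1) →
    ProPCompletionCohIso p G M ρ

/-- The class `𝒢*(p)`: the profinite completion map `G → Ĝ` induces an isomorphism
`H^*(Ĝ, M) → H^*(G, M)` for every discrete `Ĝ`-module `M` of finite `p`-power order,
i.e. for every `G`-module `M` of finite `p`-power order whose action factors through a
quotient of finite index. -/
def InGpStar (p : ℕ) (G : Type u) [Group G] : Prop :=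
  ∀ (M : Type u) [AddCommGroup M] (ρ : G →* AddAut M),
    (∃ k, Nat.card M = p ^ k) →
    (∃ N : Subgroup G, N.Normal ∧ N.FiniteIndex ∧ ∀ y ∈ N, ρ y = 1) →
    ProfiniteCompletionCohIso G M ρ

/-- The class `ℱ𝒮`: groups having only finitely many subgroups of each finite index. -/
def InFS (G : Type u) [Group G] : Prop :=
  ∀ n : ℕ, n ≠ 0 → {H : Subgroup G | H.index = n}.Finite

/-- The class `ℱℋ`: groups `G` such that `H^n(G, M)` is finite for every finite
`G`-module `M` and every `n ≥ 0`. -/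
def InFH (G : Type u) [Group G] : Prop :=
  ∀ (M : Type u) [AddCommGroup M] [Finite M] (ρ : G →* AddAut M) (n : ℕ),
    Finite (groupCoh ρ n)

/-- An abelian group has finite torsion-free rank iff `ℚ ⊗ A` is finite dimensional. -/
def HasFiniteTorsionFreeRank (A : Type v) [CommGroup A] : Prop :=
  Module.Finite ℚ (ℚ ⊗[ℤ] (Additive A))

/-- An abelian group has finite `p`-rank (its `p`-torsion subgroup is a direct sum of
finitely many cyclic and quasicyclic groups) iff its `p`-socle is finite. -/
def HasFinitePRank (p : ℕ) (A : Type v) [CommGroup A] : Prop :=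
  {a : A | a ^ p = 1}.Finite

/-- `G` has finite abelian section rank: every abelian section of `G` has finite
torsion-free rank and finite `p`-rank for every prime `p`. -/
def IsFAR (G : Type u) [Group G] : Prop :=
  ∀ (H : Subgroup G) (A : Type u) [CommGroup A] (φ : H →* A), Surjective φ →
    HasFiniteTorsionFreeRank A ∧ ∀ p : ℕ, p.Prime → HasFinitePRank p A

/-- The Prüfer `p`-group `C_{p^∞}`: the subgroup of `p`-power order elements of `ℚ/ℤ`. -/
def pruferSubgroup (p : ℕ) : AddSubgroup (AddCircle (1 : ℚ)) where
  carrier := {x | ∃ n : ℕ, p ^ n • x = 0}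
  zero_mem' := ⟨0, smul_zero _⟩
  add_mem' := by
    rintro a b ⟨m, hm⟩ ⟨n, hn⟩
    refine ⟨m + n, ?_⟩
    have ha : p ^ (m + n) • a = 0 := by rw [pow_add, mul_comm, mul_smul, hm, smul_zero]
    have hb : p ^ (m + n) • b = 0 := by rw [pow_add, mul_smul, hn, smul_zero]
    rw [smul_add, ha, hb, add_zero]
  neg_mem' := by
    rintro a ⟨m, hm⟩
    exact ⟨m, by rw [smul_neg, hm, neg_zero]⟩

/-- `G` has a subgroup isomorphic to the Prüfer `p`-group `C_{p^∞}`. -/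
def HasPruferSubgroup (p : ℕ) (G : Type u) [Group G] : Prop :=
  ∃ H : Subgroup G, Nonempty (H ≃* Multiplicative (pruferSubgroup p))

/-- `G` has a section (quotient of a subgroup) isomorphic to the Prüfer `p`-group, i.e.
`p ∈ spec G`. -/
def HasPruferSection (p : ℕ) (G : Type u) [Group G] : Prop :=
  ∃ (H : Subgroup G) (φ : H →* Multiplicative (pruferSubgroup p)), Surjective φ

/-- `H ≤_t G`: `H` is topologically embedded in `G`, i.e. the profinite topology of `G`
induces the full profinite topology on `H`. -/
def TopEmbedded {G : Type u} [Group G] (H : Subgroup G) : Prop :=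
  ∀ K : Subgroup H, K.Normal → K.FiniteIndex →
    ∃ L : Subgroup G, L.Normal ∧ L.FiniteIndex ∧ L.subgroupOf H ≤ K

/-- `H ≤_{t(p)} G`: `H` is topologically `p`-embedded in `G`, i.e. the pro-`p` topology of
`G` induces the full pro-`p` topology on `H`. -/
def TopPEmbedded (p : ℕ) {G : Type u} [Group G] (H : Subgroup G) : Prop :=
  ∀ K : Subgroup H, K.Normal → (∃ k, K.index = p ^ k) →
    ∃ L : Subgroup G, L.Normal ∧ (∃ k, L.index = p ^ k) ∧ L.subgroupOf H ≤ K

/-- The pro-`p` topology on `G` is homogeneous: every subgroup of `G` is topologically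
`p`-embedded in `G`. -/
def PHomogeneous (p : ℕ) (G : Type u) [Group G] : Prop :=
  ∀ H : Subgroup G, TopPEmbedded p H

/-- The `p`-residual of `G`: the kernel of the pro-`p` completion map, i.e. the
intersection of all normal subgroups of finite `p`-power index. -/
def pResidual (p : ℕ) (G : Type u) [Group G] : Subgroup G :=
  ⨅ (N : Subgroup G) (_ : N.Normal) (_ : ∃ k, N.index = p ^ k), N

/-- A `p'`-group: every element has finite order coprime to `p`. -/
def IsPPrimeGroup (p : ℕ) (G : Type u) [Group G] : Prop :=
  ∀ g : G, IsOfFinOrder g ∧ Nat.Coprime (orderOf g) p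

/-- The profinite topology on `G`, with the cosets of the normal subgroups of finite index
as basic open sets. -/
def profiniteTopology (G : Type u) [Group G] : TopologicalSpace G :=
  ⨅ (N : Subgroup G) (_ : N.Normal) (_ : N.FiniteIndex),
    TopologicalSpace.induced (QuotientGroup.mk (s := N)) ⊥

lemma normal_of_le_center {G : Type u} [Group G] {A : Subgroup G}
    (hA : A ≤ Subgroup.center G) : A.Normal :=
  ⟨fun a ha g => by
    have hc := (Subgroup.mem_center_iff.mp (hA ha)) g
    have : g * a * g⁻¹ = a := by rw [hc]; group
    rwa [this]⟩

lemma addAut_mul_apply {A : Type v} [Add A] (e₁ e₂ : AddAut A) (m : A) :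
    (e₁ * e₂) m = e₁ (e₂ m) :=
  rfl

section DSquared

variable {K : Type u} [Group K] {M : Type v} [AddCommGroup M]

private noncomputable def uliftMod : Module (ULift.{max u v} ℤ) (ULift.{u} M) :=
  Module.compHom _ (ULift.ringEquiv (R := ℤ)).toRingHom

attribute [local instance] uliftMod

private noncomputable def uliftRepMap (σ : K →* AddAut M) :
    ULift.{v} K →* (ULift.{u} M →ₗ[ULift.{max u v} ℤ] ULift.{u} M) where
  toFun g :=
    { toFun := fun m => ⟨σ g.down m.down⟩
      map_add' := fun a b => by
        have := map_add (σ g.down).toAddMonoidHom a.down b.down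
        exact congrArg ULift.up this
      map_smul' := fun r m => by
        have h1 : (r • m).down = r.down • m.down := rfl
        have := map_zsmul (σ g.down).toAddMonoidHom r.down m.down
        exact congrArg ULift.up (h1 ▸ this) }
  map_one' := by
    apply LinearMap.ext
    intro m
    exact congrArg ULift.up (congrFun (congrArg (fun (e : AddAut M) => ⇑e) (map_one σ)) m.down)
  map_mul' g h := by
    apply LinearMap.ext
    intro m
    show ULift.up (σ (g.down * h.down) m.down) = ULift.up (σ g.down (σ h.down m.down))
    rw [map_mul σ]
    rfl

private noncomputable def uliftRep (σ : K →* AddAut M) :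
    Rep (ULift.{max u v} ℤ) (ULift.{v} K) :=
  Rep.of (X := ULift.{u} M) (uliftRepMap σ)

private def upC (σ : K →* AddAut M) (n : ℕ) (c : (Fin n → K) → M) :
    (Fin n → ULift.{v} K) → (uliftRep σ) :=
  fun h => (ULift.up (c fun i => (h i).down) : ULift.{u} M)

private lemma upC_cochainD (σ : K →* AddAut M) (n : ℕ) (c : (Fin n → K) → M) :
    (inhomogeneousCochains.d (uliftRep σ) n).hom (upC σ n c) = upC σ (n + 1) (cochainD σ n c) := by
  funext g
  have hsmul : ∀ (j : ℕ) (x : ULift.{u} M),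
      ((-1 : ULift.{max u v} ℤ) ^ j • x).down = (-1 : ℤ) ^ j • x.down := by
    intro j x
    have h1 : ((-1 : ULift.{max u v} ℤ) ^ j).down = (-1 : ℤ) ^ j := by
      have := map_pow (ULift.ringEquiv (R := ℤ)).toRingHom (-1 : ULift.{max u v} ℤ) j
      simpa using this
    show ((-1 : ULift.{max u v} ℤ) ^ j).down • x.down = _
    rw [h1]
  have hcontract : ∀ j : Fin (n + 1),
      (fun i => (Fin.contractNth j (· * ·) g i).down) =
        Fin.contractNth j (· * ·) fun i => (g i).down :=
    by
    intro j
    funext k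
    unfold Fin.contractNth
    split_ifs <;> rfl
  have hdsum : ∀ (s : Fin (n + 1) → ULift.{u} M), (∑ j, s j).down = ∑ j, (s j).down :=
    fun s => map_sum (⟨⟨ULift.down, rfl⟩, fun _ _ => rfl⟩ : ULift.{u} M →+ M) s Finset.univ
  apply ULift.ext
  show (σ ((g 0).down) (c fun i => (g i.succ).down)) +
      (∑ j : Fin (n + 1), (-1 : ULift.{max u v} ℤ) ^ ((j : ℕ) + 1) •
        upC σ n c (Fin.contractNth j (· * ·) g)).down =
      cochainD σ n c fun i => (g i).down
  erw [hdsum]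
  erw [Finset.sum_congr rfl fun (j : Fin (n + 1)) _ =>
    hsmul ((j : ℕ) + 1) (upC σ n c (Fin.contractNth j (· * ·) g))]
  show _ = (σ ((g 0).down) (c fun i => (g i.succ).down)) +
      ∑ j : Fin (n + 1), (-1 : ℤ) ^ ((j : ℕ) + 1) •
        c (Fin.contractNth j (· * ·) fun i => (g i).down)
  simp only [← hcontract]
  rfl

private lemma cochainD_sq (σ : K →* AddAut M) (n : ℕ) (c : (Fin n → K) → M) :
    cochainD σ (n + 1) (cochainD σ n c) = 0 := by
  have hd := (groupCohomology.inhomogeneousCochains (uliftRep σ)).d_comp_d n (n + 1) (n + 2)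
  rw [groupCohomology.inhomogeneousCochains.d_def,
    groupCohomology.inhomogeneousCochains.d_def] at hd
  have h2 := LinearMap.congr_fun (congrArg ModuleCat.Hom.hom hd) (upC σ n c)
  rw [ModuleCat.hom_comp, LinearMap.comp_apply, ModuleCat.hom_zero, LinearMap.zero_apply] at h2
  have h4 : upC σ (n + 2) (cochainD σ (n + 1) (cochainD σ n c)) = 0 := by
    rw [← upC_cochainD, ← upC_cochainD]
    exact h2
  funext g
  have h3 := congrFun h4 fun i => ⟨g i⟩
  exact congrArg ULift.down h3

end DSquared
section CohAPI

variable {K K₁ K₂ : Type u} {M M' : Type v}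

lemma groupCoh_mk_eq_zero_iff [Group K] [AddCommGroup M] (σ : K →* AddAut M) (n : ℕ)
    (x : cocycleGroup σ n) :
    (QuotientAddGroup.mk x : groupCoh σ n) = 0 ↔ x.1 ∈ coboundaryGroup σ n := by
  rw [QuotientAddGroup.eq_zero_iff, AddSubgroup.mem_addSubgroupOf]

lemma groupCoh_mk_eq_mk_iff [Group K] [AddCommGroup M] (σ : K →* AddAut M) (n : ℕ)
    (x y : cocycleGroup σ n) :
    (QuotientAddGroup.mk x : groupCoh σ n) = QuotientAddGroup.mk y ↔
      y.1 - x.1 ∈ coboundaryGroup σ n := by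
  rw [QuotientAddGroup.eq, AddSubgroup.mem_addSubgroupOf]
  have : ((-x + y : cocycleGroup σ n) : (Fin n → K) → M) = y.1 - x.1 := by
    rw [AddSubgroup.coe_add, AddSubgroup.coe_neg, neg_add_eq_sub]
  rw [this]

lemma cohMap_mk [Group K₁] [Group K₂] [AddCommGroup M] (f : K₁ →* K₂) (ρ : K₂ →* AddAut M)
    (ρ' : K₁ →* AddAut M) (hcomp : ∀ g, ρ' g = ρ (f g)) (n : ℕ) (x : cocycleGroup ρ n) :
    cohMap f ρ ρ' hcomp n (QuotientAddGroup.mk x) =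
      QuotientAddGroup.mk (cocycleMap f ρ ρ' hcomp n x) :=
  rfl

lemma cohMap_comp {K₃ : Type u} [Group K₁] [Group K₂] [Group K₃] [AddCommGroup M]
    (f : K₁ →* K₂) (f₂ : K₂ →* K₃) (f₃ : K₁ →* K₃) (hf : ∀ g, f₂ (f g) = f₃ g)
    (ρ : K₃ →* AddAut M) (ρ' : K₂ →* AddAut M) (ρ'' : K₁ →* AddAut M)
    (h₂ : ∀ g, ρ' g = ρ (f₂ g)) (h₁ : ∀ g, ρ'' g = ρ' (f g)) (h₃ : ∀ g, ρ'' g = ρ (f₃ g))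
    (n : ℕ) (z : groupCoh ρ n) :
    cohMap f ρ' ρ'' h₁ n (cohMap f₂ ρ ρ' h₂ n z) = cohMap f₃ ρ ρ'' h₃ n z := by
  refine QuotientAddGroup.induction_on z fun x => ?_
  show QuotientAddGroup.mk _ = QuotientAddGroup.mk _
  refine congrArg _ (Subtype.ext ?_)
  funext g
  show x.1 (fun i => f₂ (f (g i))) = x.1 (fun i => f₃ (g i))
  exact congrArg x.1 (funext fun i => hf (g i))

/-- Postcomposition of cochains with an `AddMonoidHom` on coefficients. -/
def postcompCochain (K : Type u) [AddCommGroup M] [AddCommGroup M'] (φ : M →+ M') (n : ℕ) :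
    ((Fin n → K) → M) →+ ((Fin n → K) → M') :=
  AddMonoidHom.mk' (fun c g => φ (c g)) (fun a b => by
    funext g
    exact map_add φ _ _)

lemma postcompCochain_injective (K : Type u) [AddCommGroup M] [AddCommGroup M'] (φ : M →+ M')
    (hφ : Function.Injective φ) (n : ℕ) :
    Function.Injective (postcompCochain K φ n) := fun a b hab =>
  funext fun g => hφ (congrFun hab g)

lemma cochainD_postcomp [Group K] [AddCommGroup M] [AddCommGroup M'] (φ : M →+ M')
    (σ : K →* AddAut M) (σ' : K →* AddAut M') (hc : ∀ g m, φ (σ g m) = σ' g (φ m)) (n : ℕ)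
    (c : (Fin n → K) → M) :
    cochainD σ' n (postcompCochain K φ n c) = postcompCochain K φ (n + 1) (cochainD σ n c) := by
  funext g
  show σ' (g 0) (φ (c fun i => g i.succ)) +
      ∑ j : Fin (n + 1), (-1 : ℤ) ^ ((j : ℕ) + 1) • φ (c (Fin.contractNth j (· * ·) g)) =
    φ (σ (g 0) (c fun i => g i.succ) +
      ∑ j : Fin (n + 1), (-1 : ℤ) ^ ((j : ℕ) + 1) • c (Fin.contractNth j (· * ·) g))
  rw [map_add, map_sum, ← hc]
  congr 1
  exact Finset.sum_congr rfl fun j _ => (map_zsmul φ _ _).symm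

/-- The map on cocycles induced by a coefficient map commuting with the actions. -/
def coefCocycleMap [Group K] [AddCommGroup M] [AddCommGroup M'] (φ : M →+ M')
    (σ : K →* AddAut M) (σ' : K →* AddAut M') (hc : ∀ g m, φ (σ g m) = σ' g (φ m)) (n : ℕ) :
    cocycleGroup σ n →+ cocycleGroup σ' n :=
  AddMonoidHom.codRestrict ((postcompCochain K φ n).comp (cocycleGroup σ n).subtype) _
    (fun x => by
      have hx : cochainD σ n x.1 = 0 := x.2
      show postcompCochain K φ n x.1 ∈ (cochainD σ' n).ker
      rw [AddMonoidHom.mem_ker, cochainD_postcomp φ σ σ' hc, hx, map_zero])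

/-- The map on cohomology induced by a coefficient map commuting with the actions. -/
def coefCohMap [Group K] [AddCommGroup M] [AddCommGroup M'] (φ : M →+ M')
    (σ : K →* AddAut M) (σ' : K →* AddAut M') (hc : ∀ g m, φ (σ g m) = σ' g (φ m)) (n : ℕ) :
    groupCoh σ n →+ groupCoh σ' n :=
  QuotientAddGroup.map _ _ (coefCocycleMap φ σ σ' hc n)
    (by
      intro x hx
      rw [AddSubgroup.mem_addSubgroupOf] at hx
      rw [AddSubgroup.mem_comap, AddSubgroup.mem_addSubgroupOf]
      match n, x, hx with
      | 0, x, hx =>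
          have h0 : x.1 = 0 := hx
          show postcompCochain K φ 0 x.1 ∈ (⊥ : AddSubgroup _)
          rw [h0, map_zero]
          exact AddSubgroup.mem_bot.mpr rfl
      | (m + 1), x, hx =>
          obtain ⟨b, hb⟩ := hx
          show postcompCochain K φ (m + 1) x.1 ∈ (cochainD σ' m).range
          exact ⟨postcompCochain K φ m b, by rw [cochainD_postcomp φ σ σ' hc, hb]⟩)

lemma coefCohMap_mk [Group K] [AddCommGroup M] [AddCommGroup M'] (φ : M →+ M')
    (σ : K →* AddAut M) (σ' : K →* AddAut M') (hc : ∀ g m, φ (σ g m) = σ' g (φ m)) (n : ℕ)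
    (x : cocycleGroup σ n) :
    coefCohMap φ σ σ' hc n (QuotientAddGroup.mk x) =
      QuotientAddGroup.mk (coefCocycleMap φ σ σ' hc n x) :=
  rfl

lemma coefCohMap_cohMap [Group K₁] [Group K₂] [AddCommGroup M] [AddCommGroup M']
    (f : K₁ →* K₂) (φ : M →+ M')
    (ρ : K₂ →* AddAut M) (ρ' : K₂ →* AddAut M') (τ : K₁ →* AddAut M) (τ' : K₁ →* AddAut M')
    (hρ : ∀ g, τ g = ρ (f g)) (hρ' : ∀ g, τ' g = ρ' (f g))
    (hc : ∀ g m, φ (ρ g m) = ρ' g (φ m)) (hc' : ∀ g m, φ (τ g m) = τ' g (φ m))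
    (n : ℕ) (z : groupCoh ρ n) :
    coefCohMap φ τ τ' hc' n (cohMap f ρ τ hρ n z)
      = cohMap f ρ' τ' hρ' n (coefCohMap φ ρ ρ' hc n z) := by
  refine QuotientAddGroup.induction_on z fun x => ?_
  show QuotientAddGroup.mk _ = QuotientAddGroup.mk _
  exact congrArg _ (Subtype.ext rfl)

end CohAPI
section Triple

variable {K : Type u} [Group K] {M : Type v} [AddCommGroup M] (A : AddSubgroup M)

/-- A set-theoretic section of the quotient map `M → M ⧸ A`. -/
noncomputable def sOut : M ⧸ A → M := fun b => Quotient.out b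

lemma sOut_spec (b : M ⧸ A) : (QuotientAddGroup.mk (sOut A b) : M ⧸ A) = b :=
  Quotient.out_eq b

variable (σ : K →* AddAut M) (σA : K →* AddAut A) (σB : K →* AddAut (M ⧸ A))

/-- Membership in `A` of the differential of the lift of a `B`-cocycle. -/
lemma cochainD_sOut_mem (hB : ∀ (g : K) (m : M), σB g (QuotientAddGroup.mk m)
      = QuotientAddGroup.mk (σ g m))
    (n : ℕ) (f : cocycleGroup σB n) (g : Fin (n + 1) → K) :
    cochainD σ n (fun h => sOut A (f.1 h)) g ∈ A := by
  have h1 : postcompCochain K (QuotientAddGroup.mk' A) (n + 1)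
        (cochainD σ n (fun h => sOut A (f.1 h)))
      = cochainD σB n f.1 := by
    rw [← cochainD_postcomp (QuotientAddGroup.mk' A) σ σB (fun g m => (hB g m).symm) n]
    congr 1
    funext h
    exact sOut_spec A (f.1 h)
  have h2 : cochainD σB n f.1 = 0 := f.2
  have h3 := congrFun (h1.trans h2) g
  exact (QuotientAddGroup.eq_zero_iff _).mp h3

variable (hA : ∀ (g : K) (a : A), ((σA g a : A) : M) = σ g a)
variable (hB : ∀ (g : K) (m : M), σB g (QuotientAddGroup.mk m) = QuotientAddGroup.mk (σ g m))

/-- The connecting map at the level of cocycles. -/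
noncomputable def deltaCocycle (hA : ∀ (g : K) (a : A), ((σA g a : A) : M) = σ g a)
    (hB : ∀ (g : K) (m : M), σB g (QuotientAddGroup.mk m) = QuotientAddGroup.mk (σ g m))
    (n : ℕ) (f : cocycleGroup σB n) : cocycleGroup σA (n + 1) :=
  ⟨fun g => ⟨cochainD σ n (fun h => sOut A (f.1 h)) g, cochainD_sOut_mem A σ σB hB n f g⟩, by
    show _ ∈ (cochainD σA (n + 1)).ker
    rw [AddMonoidHom.mem_ker]
    apply postcompCochain_injective K A.subtype Subtype.coe_injective (n + 2)
    rw [map_zero, ← cochainD_postcomp A.subtype σA σ hA (n + 1)]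
    have e : postcompCochain K A.subtype (n + 1)
        (fun g => (⟨cochainD σ n (fun h => sOut A (f.1 h)) g,
          cochainD_sOut_mem A σ σB hB n f g⟩ : A)) = cochainD σ n (fun h => sOut A (f.1 h)) :=
      rfl
    rw [e, cochainD_sq]⟩

lemma deltaCocycle_wd (n : ℕ) (a b : cocycleGroup σB n)
    (h : b.1 - a.1 ∈ coboundaryGroup σB n) :
    (QuotientAddGroup.mk (deltaCocycle A σ σA σB hA hB n a) : groupCoh σA (n + 1)) =
      QuotientAddGroup.mk (deltaCocycle A σ σA σB hA hB n b) := by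
  rw [groupCoh_mk_eq_mk_iff]
  cases n with
  | zero =>
      have h0 : b.1 - a.1 = 0 := h
      have hab : a = b := Subtype.ext (sub_eq_zero.mp h0).symm
      rw [hab, sub_self]
      exact zero_mem _
  | succ m =>
      obtain ⟨cB, hcB⟩ := h
      set v : (Fin (m + 1) → K) → M :=
        (fun g => sOut A (b.1 g)) - (fun g => sOut A (a.1 g)) -
          cochainD σ m (fun h => sOut A (cB h)) with hv
      have hvA : ∀ g, v g ∈ A := by
        intro g
        have h1 : postcompCochain K (QuotientAddGroup.mk' A) (m + 1) v = 0 := by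
          rw [hv, map_sub, map_sub,
            ← cochainD_postcomp (QuotientAddGroup.mk' A) σ σB (fun g m => (hB g m).symm) m]
          have e1 : postcompCochain K (QuotientAddGroup.mk' A) (m + 1)
              (fun g => sOut A (b.1 g)) = b.1 := funext fun g => sOut_spec A (b.1 g)
          have e2 : postcompCochain K (QuotientAddGroup.mk' A) (m + 1)
              (fun g => sOut A (a.1 g)) = a.1 := funext fun g => sOut_spec A (a.1 g)
          have e3 : postcompCochain K (QuotientAddGroup.mk' A) m
              (fun g => sOut A (cB g)) = cB := funext fun g => sOut_spec A (cB g)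
          rw [e1, e2, e3, hcB, sub_self]
        exact (QuotientAddGroup.eq_zero_iff _).mp (congrFun h1 g)
      refine ⟨fun g => ⟨v g, hvA g⟩, ?_⟩
      apply postcompCochain_injective K A.subtype Subtype.coe_injective (m + 2)
      rw [← cochainD_postcomp A.subtype σA σ hA (m + 1)]
      have e4 : postcompCochain K A.subtype (m + 1) (fun g => (⟨v g, hvA g⟩ : A)) = v := rfl
      have e5 : postcompCochain K A.subtype (m + 2)
          ((deltaCocycle A σ σA σB hA hB (m + 1) b : (Fin (m + 2) → K) → A) -
            (deltaCocycle A σ σA σB hA hB (m + 1) a : (Fin (m + 2) → K) → A))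
          = cochainD σ (m + 1) (fun h => sOut A (b.1 h)) -
            cochainD σ (m + 1) (fun h => sOut A (a.1 h)) := rfl
      rw [e4, e5, hv, map_sub, map_sub, cochainD_sq, sub_zero]

/-- The connecting homomorphism (as a plain function) on cohomology. -/
noncomputable def delta (n : ℕ) (z : groupCoh σB n) : groupCoh σA (n + 1) :=
  Quotient.liftOn' z
    (fun f => (QuotientAddGroup.mk (deltaCocycle A σ σA σB hA hB n f) : groupCoh σA (n + 1)))
    (by
      intro a b hab
      have h := (QuotientAddGroup.leftRel_apply).mp hab
      rw [AddSubgroup.mem_addSubgroupOf] at h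
      have h' : b.1 - a.1 ∈ coboundaryGroup σB n := by
        have e : ((-a + b : cocycleGroup σB n) : (Fin n → K) → M ⧸ A) = b.1 - a.1 := by
          rw [AddSubgroup.coe_add, AddSubgroup.coe_neg, neg_add_eq_sub]
        rwa [e] at h
      exact deltaCocycle_wd A σ σA σB hA hB n a b h')

lemma delta_mk (n : ℕ) (f : cocycleGroup σB n) :
    delta A σ σA σB hA hB n (QuotientAddGroup.mk f) =
      QuotientAddGroup.mk (deltaCocycle A σ σA σB hA hB n f) := rfl

end Triple
section TripleExact

variable {K : Type u} [Group K] {M : Type v} [AddCommGroup M] (A : AddSubgroup M)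
variable (σ : K →* AddAut M) (σA : K →* AddAut A) (σB : K →* AddAut (M ⧸ A))
variable (hA : ∀ (g : K) (a : A), ((σA g a : A) : M) = σ g a)
variable (hB : ∀ (g : K) (m : M), σB g (QuotientAddGroup.mk m) = QuotientAddGroup.mk (σ g m))

/-- `i_* ∘ δ = 0`. -/
lemma coefCohMap_delta (n : ℕ) (z : groupCoh σB n) :
    coefCohMap A.subtype σA σ hA (n + 1) (delta A σ σA σB hA hB n z) = 0 := by
  refine QuotientAddGroup.induction_on z fun f => ?_
  erw [delta_mk, coefCohMap_mk, groupCoh_mk_eq_zero_iff]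
  exact ⟨fun h => sOut A (f.1 h), rfl⟩

/-- `δ ∘ π_* = 0`. -/
lemma delta_coefCohMap (n : ℕ) (z : groupCoh σ n) :
    delta A σ σA σB hA hB n
      (coefCohMap (QuotientAddGroup.mk' A) σ σB (fun g m => (hB g m).symm) n z) = 0 := by
  refine QuotientAddGroup.induction_on z fun c => ?_
  erw [coefCohMap_mk, delta_mk, groupCoh_mk_eq_zero_iff]
  set u : (Fin n → K) → M := (fun g => sOut A (QuotientAddGroup.mk (c.1 g))) - c.1 with hu
  have huA : ∀ g, u g ∈ A := by
    intro g
    refine (QuotientAddGroup.eq_zero_iff _).mp ?_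
    show QuotientAddGroup.mk (sOut A (QuotientAddGroup.mk (c.1 g)) - c.1 g) = 0
    rw [QuotientAddGroup.mk_sub, sOut_spec, sub_self]
  refine ⟨fun g => ⟨u g, huA g⟩, ?_⟩
  apply postcompCochain_injective K A.subtype Subtype.coe_injective (n + 1)
  rw [← cochainD_postcomp A.subtype σA σ hA n]
  have e1 : postcompCochain K A.subtype n (fun g => (⟨u g, huA g⟩ : A)) = u := rfl
  have e2 : postcompCochain K A.subtype (n + 1)
      (deltaCocycle A σ σA σB hA hB n
        (coefCocycleMap (QuotientAddGroup.mk' A) σ σB (fun g m => (hB g m).symm) n c)).1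
      = cochainD σ n (fun h => sOut A (QuotientAddGroup.mk (c.1 h))) := rfl
  rw [e1, e2, hu, map_sub]
  have hc2 : cochainD σ n c.1 = 0 := c.2
  rw [hc2, sub_zero]

/-- Exactness at `H^n(M)`: kernel of `π_*` is contained in the image of `i_*`. -/
lemma exact_i_pi (n : ℕ) (z : groupCoh σ n)
    (hz : coefCohMap (QuotientAddGroup.mk' A) σ σB (fun g m => (hB g m).symm) n z = 0) :
    ∃ w : groupCoh σA n, coefCohMap A.subtype σA σ hA n w = z := by
  obtain ⟨c, rfl⟩ := QuotientAddGroup.mk_surjective z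
  erw [coefCohMap_mk, groupCoh_mk_eq_zero_iff] at hz
  cases n with
  | zero =>
      have h0 : postcompCochain K (QuotientAddGroup.mk' A) 0 c.1 = 0 := hz
      have huA : ∀ g, c.1 g ∈ A := fun g =>
        (QuotientAddGroup.eq_zero_iff _).mp (congrFun h0 g)
      have hw : cochainD σA 0 (fun g => (⟨c.1 g, huA g⟩ : A)) = 0 := by
        apply postcompCochain_injective K A.subtype Subtype.coe_injective 1
        rw [map_zero, ← cochainD_postcomp A.subtype σA σ hA 0]
        have e1 : postcompCochain K A.subtype 0 (fun g => (⟨c.1 g, huA g⟩ : A)) = c.1 := rfl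
        rw [e1]
        exact c.2
      refine ⟨QuotientAddGroup.mk ⟨fun g => ⟨c.1 g, huA g⟩, hw⟩, ?_⟩
      erw [coefCohMap_mk]
      exact congrArg _ (Subtype.ext rfl)
  | succ m =>
      obtain ⟨b, hb⟩ := hz
      have e0 : (coefCocycleMap (QuotientAddGroup.mk' A) σ σB
          (fun g m => (hB g m).symm) (m + 1) c).1
          = postcompCochain K (QuotientAddGroup.mk' A) (m + 1) c.1 := rfl
      rw [e0] at hb
      set u : (Fin (m + 1) → K) → M := c.1 - cochainD σ m (fun h => sOut A (b h)) with hu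
      have h1 : postcompCochain K (QuotientAddGroup.mk' A) (m + 1) u = 0 := by
        rw [hu, map_sub, ← cochainD_postcomp (QuotientAddGroup.mk' A) σ σB
          (fun g m => (hB g m).symm) m]
        have e3 : postcompCochain K (QuotientAddGroup.mk' A) m
            (fun g => sOut A (b g)) = b := funext fun g => sOut_spec A (b g)
        rw [e3, hb, sub_self]
      have huA : ∀ g, u g ∈ A := fun g =>
        (QuotientAddGroup.eq_zero_iff _).mp (congrFun h1 g)
      have hw : cochainD σA (m + 1) (fun g => (⟨u g, huA g⟩ : A)) = 0 := by
        apply postcompCochain_injective K A.subtype Subtype.coe_injective (m + 2)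
        rw [map_zero, ← cochainD_postcomp A.subtype σA σ hA (m + 1)]
        have e1 : postcompCochain K A.subtype (m + 1) (fun g => (⟨u g, huA g⟩ : A)) = u := rfl
        rw [e1, hu, map_sub]
        have hc2 : cochainD σ (m + 1) c.1 = 0 := c.2
        rw [hc2, cochainD_sq, zero_sub, neg_zero]
      refine ⟨QuotientAddGroup.mk ⟨fun g => ⟨u g, huA g⟩, hw⟩, ?_⟩
      erw [coefCohMap_mk, groupCoh_mk_eq_mk_iff]
      refine ⟨fun h => sOut A (b h), ?_⟩
      have e4 : (coefCocycleMap A.subtype σA σ hA (m + 1) ⟨fun g => (⟨u g, huA g⟩ : A), hw⟩).1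
          = u := rfl
      rw [e4, hu, sub_sub_cancel]

/-- Exactness at `H^n(B)`: kernel of `δ` is contained in the image of `π_*`. -/
lemma exact_pi_delta (n : ℕ) (z : groupCoh σB n)
    (hz : delta A σ σA σB hA hB n z = 0) :
    ∃ w : groupCoh σ n,
      coefCohMap (QuotientAddGroup.mk' A) σ σB (fun g m => (hB g m).symm) n w = z := by
  obtain ⟨f, rfl⟩ := QuotientAddGroup.mk_surjective z
  erw [delta_mk, groupCoh_mk_eq_zero_iff] at hz
  obtain ⟨a0, ha0⟩ := hz
  set c0 : (Fin n → K) → M :=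
    (fun g => sOut A (f.1 g)) - postcompCochain K A.subtype n a0 with hc0
  have hcoc : cochainD σ n c0 = 0 := by
    rw [hc0, map_sub, cochainD_postcomp A.subtype σA σ hA n, ha0]
    have e1 : postcompCochain K A.subtype (n + 1) (deltaCocycle A σ σA σB hA hB n f).1
        = cochainD σ n (fun h => sOut A (f.1 h)) := rfl
    rw [e1, sub_self]
  refine ⟨QuotientAddGroup.mk ⟨c0, hcoc⟩, ?_⟩
  erw [coefCohMap_mk]
  refine congrArg _ (Subtype.ext ?_)
  show postcompCochain K (QuotientAddGroup.mk' A) n c0 = f.1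
  rw [hc0, map_sub]
  have e2 : postcompCochain K (QuotientAddGroup.mk' A) n (fun g => sOut A (f.1 g)) = f.1 :=
    funext fun g => sOut_spec A (f.1 g)
  have e3 : postcompCochain K (QuotientAddGroup.mk' A) n
      (postcompCochain K A.subtype n a0) = 0 := by
    funext g
    exact (QuotientAddGroup.eq_zero_iff _).mpr (a0 g).2
  rw [e2, e3, sub_zero]

/-- Exactness at `H^{n+1}(A)`: kernel of `i_*` is contained in the image of `δ`. -/
lemma exact_delta_i (n : ℕ) (z : groupCoh σA (n + 1))
    (hz : coefCohMap A.subtype σA σ hA (n + 1) z = 0) :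
    ∃ b : groupCoh σB n, delta A σ σA σB hA hB n b = z := by
  obtain ⟨a, rfl⟩ := QuotientAddGroup.mk_surjective z
  erw [coefCohMap_mk, groupCoh_mk_eq_zero_iff] at hz
  obtain ⟨m0, hm0⟩ := hz
  have e0 : (coefCocycleMap A.subtype σA σ hA (n + 1) a).1
      = postcompCochain K A.subtype (n + 1) a.1 := rfl
  rw [e0] at hm0
  set b0 : (Fin n → K) → M ⧸ A := postcompCochain K (QuotientAddGroup.mk' A) n m0 with hb0
  have hbcoc : cochainD σB n b0 = 0 := by
    rw [hb0, cochainD_postcomp (QuotientAddGroup.mk' A) σ σB (fun g m => (hB g m).symm) n,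
      hm0]
    funext g
    exact (QuotientAddGroup.eq_zero_iff _).mpr (a.1 g).2
  refine ⟨QuotientAddGroup.mk ⟨b0, hbcoc⟩, ?_⟩
  erw [delta_mk, groupCoh_mk_eq_mk_iff]
  set v : (Fin n → K) → M := m0 - (fun g => sOut A (b0 g)) with hv
  have hvA : ∀ g, v g ∈ A := by
    intro g
    refine (QuotientAddGroup.eq_zero_iff _).mp ?_
    show QuotientAddGroup.mk (m0 g - sOut A (b0 g)) = 0
    rw [QuotientAddGroup.mk_sub, sOut_spec]
    show QuotientAddGroup.mk (m0 g) - QuotientAddGroup.mk (m0 g) = 0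
    rw [sub_self]
  refine ⟨fun g => ⟨v g, hvA g⟩, ?_⟩
  apply postcompCochain_injective K A.subtype Subtype.coe_injective (n + 1)
  rw [← cochainD_postcomp A.subtype σA σ hA n]
  have e1 : postcompCochain K A.subtype n (fun g => (⟨v g, hvA g⟩ : A)) = v := rfl
  have e2 : postcompCochain K A.subtype (n + 1)
      ((a : (Fin (n + 1) → K) → A) -
        (deltaCocycle A σ σA σB hA hB n ⟨b0, hbcoc⟩ : (Fin (n + 1) → K) → A))
      = postcompCochain K A.subtype (n + 1) a.1 -
        cochainD σ n (fun h => sOut A (b0 h)) := rfl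
  rw [e1, e2, hv, map_sub, hm0]

/-- `i_*` is injective in degree `0`. -/
lemma i_injective_degree_zero (z : groupCoh σA 0)
    (hz : coefCohMap A.subtype σA σ hA 0 z = 0) : z = 0 := by
  obtain ⟨a, rfl⟩ := QuotientAddGroup.mk_surjective z
  erw [coefCohMap_mk, groupCoh_mk_eq_zero_iff] at hz
  have h0 : postcompCochain K A.subtype 0 a.1 = 0 := hz
  have ha : a.1 = 0 := by
    apply postcompCochain_injective K A.subtype Subtype.coe_injective 0
    rw [map_zero, h0]
  have : a = 0 := Subtype.ext ha
  rw [this]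
  rfl

variable {K' : Type u} [Group K'] (f : K' →* K)
variable (σ' : K' →* AddAut M) (σA' : K' →* AddAut A) (σB' : K' →* AddAut (M ⧸ A))

lemma deltaCocycle_cocycleMap
    (hA' : ∀ (g : K') (a : A), ((σA' g a : A) : M) = σ' g a)
    (hB' : ∀ (g : K') (m : M), σB' g (QuotientAddGroup.mk m) = QuotientAddGroup.mk (σ' g m))
    (hfσ : ∀ g, σ' g = σ (f g)) (hfA : ∀ g, σA' g = σA (f g)) (hfB : ∀ g, σB' g = σB (f g))
    (n : ℕ) (c : cocycleGroup σB n) :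
    deltaCocycle A σ' σA' σB' hA' hB' n (cocycleMap f σB σB' hfB n c)
      = cocycleMap f σA σA' hfA (n + 1) (deltaCocycle A σ σA σB hA hB n c) := by
  refine Subtype.ext (funext fun g => Subtype.ext ?_)
  show cochainD σ' n (fun h => sOut A ((precompCochain f n c.1) h)) g
      = cochainD σ n (fun h => sOut A (c.1 h)) (fun i => f (g i))
  have e : (fun h => sOut A ((precompCochain f n c.1) h))
      = precompCochain f n (fun h => sOut A (c.1 h)) := rfl
  rw [e, cochainD_precomp f σ σ' hfσ n]
  rfl

lemma delta_cohMap
    (hA' : ∀ (g : K') (a : A), ((σA' g a : A) : M) = σ' g a)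
    (hB' : ∀ (g : K') (m : M), σB' g (QuotientAddGroup.mk m) = QuotientAddGroup.mk (σ' g m))
    (hfσ : ∀ g, σ' g = σ (f g)) (hfA : ∀ g, σA' g = σA (f g)) (hfB : ∀ g, σB' g = σB (f g))
    (n : ℕ) (z : groupCoh σB n) :
    delta A σ' σA' σB' hA' hB' n (cohMap f σB σB' hfB n z)
      = cohMap f σA σA' hfA (n + 1) (delta A σ σA σB hA hB n z) := by
  refine QuotientAddGroup.induction_on z fun c => ?_
  rw [cohMap_mk, delta_mk, delta_mk, cohMap_mk,
    deltaCocycle_cocycleMap A σ σA σB hA hB f σ' σA' σB' hA' hB' hfσ hfA hfB n c]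

end TripleExact
section GpPrep

variable {G : Type u} [Group G] {M : Type v} [AddCommGroup M]

lemma inf_index_pPow (p : ℕ) (hp : p.Prime) (N N' : Subgroup G) [N.Normal]
    (hN : ∃ k, N.index = p ^ k) (hN' : ∃ k, N'.index = p ^ k) :
    ∃ k, (N ⊓ N').index = p ^ k := by
  obtain ⟨a, ha⟩ := hN
  obtain ⟨b, hb⟩ := hN'
  have hdvd : (N ⊓ N').index ∣ p ^ (a + b) := by
    have h1 : (N ⊓ N').relIndex N' * N'.index = (N ⊓ N').index :=
      Subgroup.relIndex_mul_index inf_le_right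
    have h2 : (N ⊓ N').relIndex N' = N.relIndex N' := Subgroup.inf_relIndex_right N N'
    have h3 : N.relIndex N' ∣ N.index := Subgroup.relIndex_dvd_index_of_normal N N'
    rw [← h1, h2, pow_add, ← ha, ← hb]
    exact mul_dvd_mul h3 dvd_rfl
  obtain ⟨k, _, hk⟩ := (Nat.dvd_prime_pow hp).mp hdvd
  exact ⟨k, hk⟩

/-- The subgroup of `G`-fixed points. -/
def fixedSub (ρ : G →* AddAut M) : AddSubgroup M where
  carrier := {m | ∀ g, ρ g m = m}
  zero_mem' := fun g => map_zero (ρ g)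
  add_mem' := fun {a b} ha hb g => by rw [map_add, ha g, hb g]
  neg_mem' := fun {a} ha g => by rw [map_neg, ha g]

lemma fixedSub_stab (ρ : G →* AddAut M) (g : G) (a : M) (ha : a ∈ fixedSub ρ) :
    ρ g a ∈ fixedSub ρ := by
  rw [ha g]
  exact ha

/-- The induced action on the quotient by a stable subgroup. -/
def quotModAut (ρ : G →* AddAut M) (A : AddSubgroup M)
    (hstab : ∀ (g : G) (a : M), a ∈ A → ρ g a ∈ A) : G →* AddAut (M ⧸ A) where
  toFun g :=
    { toFun := QuotientAddGroup.map A A (ρ g).toAddMonoidHom (fun a ha => hstab g a ha)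
      invFun := QuotientAddGroup.map A A (ρ g⁻¹).toAddMonoidHom (fun a ha => hstab g⁻¹ a ha)
      left_inv := fun q => QuotientAddGroup.induction_on q fun m => by
        show QuotientAddGroup.mk (ρ g⁻¹ (ρ g m)) = QuotientAddGroup.mk m
        rw [← addAut_mul_apply, ← map_mul, inv_mul_cancel, map_one]
        rfl
      right_inv := fun q => QuotientAddGroup.induction_on q fun m => by
        show QuotientAddGroup.mk (ρ g (ρ g⁻¹ m)) = QuotientAddGroup.mk m
        rw [← addAut_mul_apply, ← map_mul, mul_inv_cancel, map_one]
        rfl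
      map_add' := fun a b => map_add _ a b }
  map_one' := by
    ext q
    refine QuotientAddGroup.induction_on q fun m => ?_
    show QuotientAddGroup.mk (ρ 1 m) = QuotientAddGroup.mk m
    rw [map_one]
    rfl
  map_mul' g h := by
    ext q
    refine QuotientAddGroup.induction_on q fun m => ?_
    show QuotientAddGroup.mk (ρ (g * h) m) = QuotientAddGroup.mk (ρ g (ρ h m))
    rw [map_mul]
    rfl

lemma quotModAut_mk (ρ : G →* AddAut M) (A : AddSubgroup M)
    (hstab : ∀ (g : G) (a : M), a ∈ A → ρ g a ∈ A) (g : G) (m : M) :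
    quotModAut ρ A hstab g (QuotientAddGroup.mk m) = QuotientAddGroup.mk (ρ g m) := rfl

lemma quotModAut_triv (ρ : G →* AddAut M) (A : AddSubgroup M)
    (hstab : ∀ (g : G) (a : M), a ∈ A → ρ g a ∈ A) (g : G) (hg : ρ g = 1) :
    quotModAut ρ A hstab g = 1 := by
  ext q
  refine QuotientAddGroup.induction_on q fun m => ?_
  show QuotientAddGroup.mk (ρ g m) = QuotientAddGroup.mk m
  rw [hg]
  rfl

end GpPrep
section LevelPrep

variable {G : Type u} [Group G] {M : Type v} [AddCommGroup M]

lemma cohMap_push (ρ : G →* AddAut M) (N N' : Subgroup G) [N.Normal] [N'.Normal]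
    (hle : N' ≤ N) (h1 : ∀ y ∈ N, ρ y = 1) (h1' : ∀ y ∈ N', ρ y = 1) (n : ℕ)
    (z : groupCoh (quotAut ρ N h1) n) :
    cohMap (QuotientGroup.mk' N') (quotAut ρ N' h1') ρ (fun _ => rfl) n
      (cohMap (quotMapHom N N' hle) (quotAut ρ N h1) (quotAut ρ N' h1')
        (fun x => quotAut_comp_quotMap ρ N N' hle h1 x) n z)
      = cohMap (QuotientGroup.mk' N) (quotAut ρ N h1) ρ (fun _ => rfl) n z :=
  cohMap_comp (QuotientGroup.mk' N') (quotMapHom N N' hle) (QuotientGroup.mk' N)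
    (fun _ => rfl) (quotAut ρ N h1) (quotAut ρ N' h1') ρ
    (fun x => quotAut_comp_quotMap ρ N N' hle h1 x) (fun _ => rfl) (fun _ => rfl) n z

lemma cohMap_push2 (ρ : G →* AddAut M) (N N' N'' : Subgroup G) [N.Normal] [N'.Normal]
    [N''.Normal] (hle : N' ≤ N) (hle' : N'' ≤ N') (h1 : ∀ y ∈ N, ρ y = 1)
    (h1' : ∀ y ∈ N', ρ y = 1) (h1'' : ∀ y ∈ N'', ρ y = 1) (n : ℕ)
    (z : groupCoh (quotAut ρ N h1) n) :
    cohMap (quotMapHom N' N'' hle') (quotAut ρ N' h1') (quotAut ρ N'' h1'')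
      (fun x => quotAut_comp_quotMap ρ N' N'' hle' h1' x) n
      (cohMap (quotMapHom N N' hle) (quotAut ρ N h1) (quotAut ρ N' h1')
        (fun x => quotAut_comp_quotMap ρ N N' hle h1 x) n z)
      = cohMap (quotMapHom N N'' (hle'.trans hle)) (quotAut ρ N h1) (quotAut ρ N'' h1'')
          (fun x => quotAut_comp_quotMap ρ N N'' (hle'.trans hle) h1 x) n z :=
  cohMap_comp (quotMapHom N' N'' hle') (quotMapHom N N' hle)
    (quotMapHom N N'' (hle'.trans hle))
    (fun q => QuotientGroup.induction_on q fun _ => rfl)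
    (quotAut ρ N h1) (quotAut ρ N' h1') (quotAut ρ N'' h1'') _ _ _ n z

lemma hA_lvl (ρ : G →* AddAut M) (L : Subgroup G) [L.Normal] (hL : ∀ y ∈ L, ρ y = 1)
    (q : G ⧸ L) (a : fixedSub ρ) :
    ((quotAut (1 : G →* AddAut (fixedSub ρ)) L (fun _ _ => rfl) q a : fixedSub ρ) : M)
      = quotAut ρ L hL q a := by
  refine QuotientGroup.induction_on q fun g => ?_
  exact (a.2 g).symm

lemma hB_lvl (ρ : G →* AddAut M) (L : Subgroup G) [L.Normal] (hL : ∀ y ∈ L, ρ y = 1)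
    (q : G ⧸ L) (m : M) :
    quotAut (quotModAut ρ (fixedSub ρ) (fixedSub_stab ρ)) L
        (fun y hy => quotModAut_triv ρ (fixedSub ρ) (fixedSub_stab ρ) y (hL y hy)) q
        (QuotientAddGroup.mk m)
      = QuotientAddGroup.mk (quotAut ρ L hL q m) := by
  refine QuotientGroup.induction_on q fun g => ?_
  rfl

end LevelPrep
section Pieces

variable {G : Type u} [Group G] {M : Type v} [AddCommGroup M]

lemma iso_of_pieces (p : ℕ) (hp : p.Prime) (ρ : G →* AddAut M) (N : Subgroup G)
    [hNn : N.Normal] (hNidx : ∃ k, N.index = p ^ k) (hNtriv : ∀ y ∈ N, ρ y = 1)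
    (hIsoA : ProPCompletionCohIso p G (fixedSub ρ) 1)
    (hIsoB : ProPCompletionCohIso p G (M ⧸ fixedSub ρ)
      (quotModAut ρ (fixedSub ρ) (fixedSub_stab ρ))) :
    ProPCompletionCohIso p G M ρ := by
  have hA_G : ∀ (g : G) (a : fixedSub ρ),
      (((1 : G →* AddAut (fixedSub ρ)) g a : fixedSub ρ) : M) = ρ g a :=
    fun g a => (a.2 g).symm
  have hB_G : ∀ (g : G) (m : M),
      quotModAut ρ (fixedSub ρ) (fixedSub_stab ρ) g (QuotientAddGroup.mk m)
        = QuotientAddGroup.mk (ρ g m) := fun g m => rfl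
  intro n
  constructor
  · -- surjectivity
    intro x
    obtain ⟨N1, hN1n, hN1idx, h1B1, zB, hzB⟩ :=
      (hIsoB n).1 (coefCohMap (QuotientAddGroup.mk' (fixedSub ρ)) ρ
        (quotModAut ρ (fixedSub ρ) (fixedSub_stab ρ)) (fun _ _ => rfl) n x)
    haveI := hN1n
    have hLn : (N1 ⊓ N).Normal := inferInstance
    have hLidx : ∃ k, (N1 ⊓ N).index = p ^ k := inf_index_pPow p hp N1 N hN1idx hNidx
    have hLtriv : ∀ y ∈ N1 ⊓ N, ρ y = 1 := fun y hy => hNtriv y hy.2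
    have hLtrivB : ∀ y ∈ N1 ⊓ N, quotModAut ρ (fixedSub ρ) (fixedSub_stab ρ) y = 1 :=
      fun y hy => h1B1 y hy.1
    set zB1 := cohMap (quotMapHom N1 (N1 ⊓ N) inf_le_left)
      (quotAut (quotModAut ρ (fixedSub ρ) (fixedSub_stab ρ)) N1 h1B1)
      (quotAut (quotModAut ρ (fixedSub ρ) (fixedSub_stab ρ)) (N1 ⊓ N) hLtrivB)
      (fun q => quotAut_comp_quotMap _ N1 (N1 ⊓ N) inf_le_left h1B1 q) n zB with hzB1def
    have hinflzB1 : cohMap (QuotientGroup.mk' (N1 ⊓ N))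
        (quotAut (quotModAut ρ (fixedSub ρ) (fixedSub_stab ρ)) (N1 ⊓ N) hLtrivB)
        (quotModAut ρ (fixedSub ρ) (fixedSub_stab ρ)) (fun _ => rfl) n zB1
        = coefCohMap (QuotientAddGroup.mk' (fixedSub ρ)) ρ
            (quotModAut ρ (fixedSub ρ) (fixedSub_stab ρ)) (fun _ _ => rfl) n x := by
      rw [hzB1def,
        cohMap_push (quotModAut ρ (fixedSub ρ) (fixedSub_stab ρ)) N1 (N1 ⊓ N)
          inf_le_left h1B1 hLtrivB n zB, hzB]
    set dL := delta (fixedSub ρ) (quotAut ρ (N1 ⊓ N) hLtriv)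
      (quotAut 1 (N1 ⊓ N) (fun _ _ => rfl))
      (quotAut (quotModAut ρ (fixedSub ρ) (fixedSub_stab ρ)) (N1 ⊓ N) hLtrivB)
      (hA_lvl ρ (N1 ⊓ N) hLtriv) (hB_lvl ρ (N1 ⊓ N) hLtriv) n zB1 with hdLdef
    have hdL0 : cohMap (QuotientGroup.mk' (N1 ⊓ N))
        (quotAut (1 : G →* AddAut (fixedSub ρ)) (N1 ⊓ N) (fun _ _ => rfl))
        (1 : G →* AddAut (fixedSub ρ)) (fun _ => rfl) (n + 1) dL = 0 := by
      have hcomm := delta_cohMap (fixedSub ρ) (quotAut ρ (N1 ⊓ N) hLtriv)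
        (quotAut 1 (N1 ⊓ N) (fun _ _ => rfl))
        (quotAut (quotModAut ρ (fixedSub ρ) (fixedSub_stab ρ)) (N1 ⊓ N) hLtrivB)
        (hA_lvl ρ (N1 ⊓ N) hLtriv) (hB_lvl ρ (N1 ⊓ N) hLtriv)
        (QuotientGroup.mk' (N1 ⊓ N)) ρ (1 : G →* AddAut (fixedSub ρ))
        (quotModAut ρ (fixedSub ρ) (fixedSub_stab ρ)) hA_G hB_G
        (fun _ => rfl) (fun _ => rfl) (fun _ => rfl) n zB1
      rw [hdLdef, ← hcomm, hinflzB1]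
      exact delta_coefCohMap (fixedSub ρ) ρ (1 : G →* AddAut (fixedSub ρ))
        (quotModAut ρ (fixedSub ρ) (fixedSub_stab ρ)) hA_G hB_G n x
    obtain ⟨N2, hN2n, hN2idx, hle2, hkill⟩ :=
      (hIsoA (n + 1)).2 (N1 ⊓ N) hLn hLidx (fun _ _ => rfl) dL hdL0
    haveI := hN2n
    have hN2triv : ∀ y ∈ N2, ρ y = 1 := fun y hy => hLtriv y (hle2 hy)
    have hN2trivB : ∀ y ∈ N2, quotModAut ρ (fixedSub ρ) (fixedSub_stab ρ) y = 1 :=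
      fun y hy => hLtrivB y (hle2 hy)
    set zB2 := cohMap (quotMapHom (N1 ⊓ N) N2 hle2)
      (quotAut (quotModAut ρ (fixedSub ρ) (fixedSub_stab ρ)) (N1 ⊓ N) hLtrivB)
      (quotAut (quotModAut ρ (fixedSub ρ) (fixedSub_stab ρ)) N2 hN2trivB)
      (fun q => quotAut_comp_quotMap _ (N1 ⊓ N) N2 hle2 hLtrivB q) n zB1 with hzB2def
    have hdN2 : delta (fixedSub ρ) (quotAut ρ N2 hN2triv) (quotAut 1 N2 (fun _ _ => rfl))
        (quotAut (quotModAut ρ (fixedSub ρ) (fixedSub_stab ρ)) N2 hN2trivB)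
        (hA_lvl ρ N2 hN2triv) (hB_lvl ρ N2 hN2triv) n zB2 = 0 := by
      have hcomm := delta_cohMap (fixedSub ρ) (quotAut ρ (N1 ⊓ N) hLtriv)
        (quotAut 1 (N1 ⊓ N) (fun _ _ => rfl))
        (quotAut (quotModAut ρ (fixedSub ρ) (fixedSub_stab ρ)) (N1 ⊓ N) hLtrivB)
        (hA_lvl ρ (N1 ⊓ N) hLtriv) (hB_lvl ρ (N1 ⊓ N) hLtriv)
        (quotMapHom (N1 ⊓ N) N2 hle2) (quotAut ρ N2 hN2triv)
        (quotAut 1 N2 (fun _ _ => rfl))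
        (quotAut (quotModAut ρ (fixedSub ρ) (fixedSub_stab ρ)) N2 hN2trivB)
        (hA_lvl ρ N2 hN2triv) (hB_lvl ρ N2 hN2triv)
        (fun q => quotAut_comp_quotMap ρ (N1 ⊓ N) N2 hle2 hLtriv q)
        (fun q => quotAut_comp_quotMap (1 : G →* AddAut (fixedSub ρ)) (N1 ⊓ N) N2 hle2
          (fun _ _ => rfl) q)
        (fun q => quotAut_comp_quotMap _ (N1 ⊓ N) N2 hle2 hLtrivB q) n zB1
      rw [hzB2def, hcomm, ← hdLdef]
      exact hkill
    obtain ⟨w, hw⟩ := exact_pi_delta (fixedSub ρ) (quotAut ρ N2 hN2triv)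
      (quotAut 1 N2 (fun _ _ => rfl))
      (quotAut (quotModAut ρ (fixedSub ρ) (fixedSub_stab ρ)) N2 hN2trivB)
      (hA_lvl ρ N2 hN2triv) (hB_lvl ρ N2 hN2triv) n zB2 hdN2
    have hπw : coefCohMap (QuotientAddGroup.mk' (fixedSub ρ)) ρ
        (quotModAut ρ (fixedSub ρ) (fixedSub_stab ρ)) (fun _ _ => rfl) n
        (cohMap (QuotientGroup.mk' N2) (quotAut ρ N2 hN2triv) ρ (fun _ => rfl) n w - x)
        = 0 := by
      rw [map_sub]
      rw [coefCohMap_cohMap (QuotientGroup.mk' N2) (QuotientAddGroup.mk' (fixedSub ρ))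
        (quotAut ρ N2 hN2triv)
        (quotAut (quotModAut ρ (fixedSub ρ) (fixedSub_stab ρ)) N2 hN2trivB)
        ρ (quotModAut ρ (fixedSub ρ) (fixedSub_stab ρ)) (fun _ => rfl) (fun _ => rfl)
        (fun q m => (hB_lvl ρ N2 hN2triv q m).symm) (fun _ _ => rfl) n w, hw, hzB2def,
        cohMap_push (quotModAut ρ (fixedSub ρ) (fixedSub_stab ρ)) (N1 ⊓ N) N2 hle2
          hLtrivB hN2trivB n zB1, hinflzB1, sub_self]
    obtain ⟨a, ha⟩ := exact_i_pi (fixedSub ρ) ρ (1 : G →* AddAut (fixedSub ρ))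
      (quotModAut ρ (fixedSub ρ) (fixedSub_stab ρ)) hA_G hB_G n _ hπw
    obtain ⟨N3, hN3n, hN3idx, h1A3, a', ha'⟩ := (hIsoA n).1 a
    haveI := hN3n
    have hL2n : (N2 ⊓ N3).Normal := inferInstance
    have hL2idx : ∃ k, (N2 ⊓ N3).index = p ^ k := inf_index_pPow p hp N2 N3 hN2idx hN3idx
    have hL2triv : ∀ y ∈ N2 ⊓ N3, ρ y = 1 := fun y hy => hN2triv y hy.1
    refine ⟨N2 ⊓ N3, hL2n, hL2idx, hL2triv,
      cohMap (quotMapHom N2 (N2 ⊓ N3) inf_le_left) (quotAut ρ N2 hN2triv)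
        (quotAut ρ (N2 ⊓ N3) hL2triv)
        (fun q => quotAut_comp_quotMap ρ N2 (N2 ⊓ N3) inf_le_left hN2triv q) n w
      - coefCohMap (fixedSub ρ).subtype (quotAut 1 (N2 ⊓ N3) (fun _ _ => rfl))
          (quotAut ρ (N2 ⊓ N3) hL2triv) (hA_lvl ρ (N2 ⊓ N3) hL2triv) n
          (cohMap (quotMapHom N3 (N2 ⊓ N3) inf_le_right) (quotAut 1 N3 h1A3)
            (quotAut 1 (N2 ⊓ N3) (fun _ _ => rfl))
            (fun q => quotAut_comp_quotMap (1 : G →* AddAut (fixedSub ρ)) N3 (N2 ⊓ N3)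
              inf_le_right h1A3 q) n a'), ?_⟩
    rw [map_sub]
    rw [cohMap_push ρ N2 (N2 ⊓ N3) inf_le_left hN2triv hL2triv n w]
    rw [← coefCohMap_cohMap (QuotientGroup.mk' (N2 ⊓ N3)) (fixedSub ρ).subtype
      (quotAut (1 : G →* AddAut (fixedSub ρ)) (N2 ⊓ N3) (fun _ _ => rfl))
      (quotAut ρ (N2 ⊓ N3) hL2triv) (1 : G →* AddAut (fixedSub ρ)) ρ
      (fun _ => rfl) (fun _ => rfl) (hA_lvl ρ (N2 ⊓ N3) hL2triv) hA_G n _]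
    rw [cohMap_push (1 : G →* AddAut (fixedSub ρ)) N3 (N2 ⊓ N3) inf_le_right h1A3
      (fun _ _ => rfl) n a', ha', ha, sub_sub_cancel]
  · -- injectivity
    intro N0 hN0n hN0idx h1 z hz
    haveI := hN0n
    have hB0 : ∀ y ∈ N0, quotModAut ρ (fixedSub ρ) (fixedSub_stab ρ) y = 1 :=
      fun y hy => quotModAut_triv ρ (fixedSub ρ) (fixedSub_stab ρ) y (h1 y hy)
    have hπz0 : cohMap (QuotientGroup.mk' N0)
        (quotAut (quotModAut ρ (fixedSub ρ) (fixedSub_stab ρ)) N0 hB0)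
        (quotModAut ρ (fixedSub ρ) (fixedSub_stab ρ)) (fun _ => rfl) n
        (coefCohMap (QuotientAddGroup.mk' (fixedSub ρ)) (quotAut ρ N0 h1)
          (quotAut (quotModAut ρ (fixedSub ρ) (fixedSub_stab ρ)) N0 hB0)
          (fun q m => (hB_lvl ρ N0 h1 q m).symm) n z) = 0 := by
      rw [← coefCohMap_cohMap (QuotientGroup.mk' N0) (QuotientAddGroup.mk' (fixedSub ρ))
        (quotAut ρ N0 h1) (quotAut (quotModAut ρ (fixedSub ρ) (fixedSub_stab ρ)) N0 hB0)
        ρ (quotModAut ρ (fixedSub ρ) (fixedSub_stab ρ)) (fun _ => rfl) (fun _ => rfl)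
        (fun q m => (hB_lvl ρ N0 h1 q m).symm) (fun _ _ => rfl) n z, hz, map_zero]
    obtain ⟨N1, hN1n, hN1idx, hle1, hz1B⟩ := (hIsoB n).2 N0 hN0n hN0idx hB0 _ hπz0
    haveI := hN1n
    have hρ1 : ∀ y ∈ N1, ρ y = 1 := fun y hy => h1 y (hle1 hy)
    have hB1 : ∀ y ∈ N1, quotModAut ρ (fixedSub ρ) (fixedSub_stab ρ) y = 1 :=
      fun y hy => hB0 y (hle1 hy)
    set z1 := cohMap (quotMapHom N0 N1 hle1) (quotAut ρ N0 h1) (quotAut ρ N1 hρ1)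
      (fun q => quotAut_comp_quotMap ρ N0 N1 hle1 h1 q) n z with hz1def
    have hπz1 : coefCohMap (QuotientAddGroup.mk' (fixedSub ρ)) (quotAut ρ N1 hρ1)
        (quotAut (quotModAut ρ (fixedSub ρ) (fixedSub_stab ρ)) N1 hB1)
        (fun q m => (hB_lvl ρ N1 hρ1 q m).symm) n z1 = 0 := by
      rw [hz1def, coefCohMap_cohMap (quotMapHom N0 N1 hle1)
        (QuotientAddGroup.mk' (fixedSub ρ)) (quotAut ρ N0 h1)
        (quotAut (quotModAut ρ (fixedSub ρ) (fixedSub_stab ρ)) N0 hB0)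
        (quotAut ρ N1 hρ1) (quotAut (quotModAut ρ (fixedSub ρ) (fixedSub_stab ρ)) N1 hB1)
        (fun q => quotAut_comp_quotMap ρ N0 N1 hle1 h1 q)
        (fun q => quotAut_comp_quotMap _ N0 N1 hle1 hB0 q)
        (fun q m => (hB_lvl ρ N0 h1 q m).symm)
        (fun q m => (hB_lvl ρ N1 hρ1 q m).symm) n z]
      exact hz1B
    obtain ⟨a, ha⟩ := exact_i_pi (fixedSub ρ) (quotAut ρ N1 hρ1)
      (quotAut 1 N1 (fun _ _ => rfl))
      (quotAut (quotModAut ρ (fixedSub ρ) (fixedSub_stab ρ)) N1 hB1)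
      (hA_lvl ρ N1 hρ1) (hB_lvl ρ N1 hρ1) n z1 hπz1
    have hia0 : coefCohMap (fixedSub ρ).subtype (1 : G →* AddAut (fixedSub ρ)) ρ hA_G n
        (cohMap (QuotientGroup.mk' N1) (quotAut (1 : G →* AddAut (fixedSub ρ)) N1
          (fun _ _ => rfl)) (1 : G →* AddAut (fixedSub ρ)) (fun _ => rfl) n a) = 0 := by
      rw [coefCohMap_cohMap (QuotientGroup.mk' N1) (fixedSub ρ).subtype
        (quotAut (1 : G →* AddAut (fixedSub ρ)) N1 (fun _ _ => rfl)) (quotAut ρ N1 hρ1)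
        (1 : G →* AddAut (fixedSub ρ)) ρ (fun _ => rfl) (fun _ => rfl)
        (hA_lvl ρ N1 hρ1) hA_G n a, ha, hz1def,
        cohMap_push ρ N0 N1 hle1 h1 hρ1 n z, hz]
    cases n with
    | zero =>
        have ha0 : cohMap (QuotientGroup.mk' N1)
            (quotAut (1 : G →* AddAut (fixedSub ρ)) N1 (fun _ _ => rfl))
            (1 : G →* AddAut (fixedSub ρ)) (fun _ => rfl) 0 a = 0 :=
          i_injective_degree_zero (fixedSub ρ) ρ (1 : G →* AddAut (fixedSub ρ))
            hA_G _ hia0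
        obtain ⟨N4, hN4n, hN4idx, hle4, hkill4⟩ :=
          (hIsoA 0).2 N1 hN1n hN1idx (fun _ _ => rfl) a ha0
        haveI := hN4n
        have hρ4 : ∀ y ∈ N4, ρ y = 1 := fun y hy => hρ1 y (hle4 hy)
        refine ⟨N4, hN4n, hN4idx, hle4.trans hle1, ?_⟩
        have e1 : cohMap (quotMapHom N0 N4 (hle4.trans hle1)) (quotAut ρ N0 h1)
            (quotAut ρ N4 (fun g hg => h1 g ((hle4.trans hle1) hg)))
            (fun q => quotAut_comp_quotMap ρ N0 N4 (hle4.trans hle1) h1 q) 0 z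
            = cohMap (quotMapHom N1 N4 hle4) (quotAut ρ N1 hρ1)
              (quotAut ρ N4 hρ4)
              (fun q => quotAut_comp_quotMap ρ N1 N4 hle4 hρ1 q) 0 z1 := by
          rw [hz1def, cohMap_push2 ρ N0 N1 N4 hle1 hle4 h1 hρ1 hρ4 0 z]
        rw [e1, ← ha, ← coefCohMap_cohMap (quotMapHom N1 N4 hle4) (fixedSub ρ).subtype
          (quotAut (1 : G →* AddAut (fixedSub ρ)) N1 (fun _ _ => rfl)) (quotAut ρ N1 hρ1)
          (quotAut (1 : G →* AddAut (fixedSub ρ)) N4 (fun _ _ => rfl)) (quotAut ρ N4 hρ4)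
          (fun q => quotAut_comp_quotMap (1 : G →* AddAut (fixedSub ρ)) N1 N4 hle4
            (fun _ _ => rfl) q)
          (fun q => quotAut_comp_quotMap ρ N1 N4 hle4 hρ1 q)
          (hA_lvl ρ N1 hρ1) (hA_lvl ρ N4 hρ4) 0 a, hkill4, map_zero]
    | succ m =>
        obtain ⟨b, hb⟩ := exact_delta_i (fixedSub ρ) ρ (1 : G →* AddAut (fixedSub ρ))
          (quotModAut ρ (fixedSub ρ) (fixedSub_stab ρ)) hA_G hB_G m
          (cohMap (QuotientGroup.mk' N1) (quotAut (1 : G →* AddAut (fixedSub ρ)) N1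
            (fun _ _ => rfl)) (1 : G →* AddAut (fixedSub ρ)) (fun _ => rfl) (m + 1) a)
          hia0
        obtain ⟨N2, hN2n, hN2idx, hB2, b', hb'⟩ := (hIsoB m).1 b
        haveI := hN2n
        have hL3n : (N1 ⊓ N2).Normal := inferInstance
        have hL3idx : ∃ k, (N1 ⊓ N2).index = p ^ k :=
          inf_index_pPow p hp N1 N2 hN1idx hN2idx
        have hρ3 : ∀ y ∈ N1 ⊓ N2, ρ y = 1 := fun y hy => hρ1 y hy.1
        have hB3 : ∀ y ∈ N1 ⊓ N2, quotModAut ρ (fixedSub ρ) (fixedSub_stab ρ) y = 1 :=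
          fun y hy => quotModAut_triv ρ (fixedSub ρ) (fixedSub_stab ρ) y (hρ3 y hy)
        set b3 := cohMap (quotMapHom N2 (N1 ⊓ N2) inf_le_right)
          (quotAut (quotModAut ρ (fixedSub ρ) (fixedSub_stab ρ)) N2 hB2)
          (quotAut (quotModAut ρ (fixedSub ρ) (fixedSub_stab ρ)) (N1 ⊓ N2) hB3)
          (fun q => quotAut_comp_quotMap _ N2 (N1 ⊓ N2) inf_le_right hB2 q) m b'
          with hb3def
        set a3 := cohMap (quotMapHom N1 (N1 ⊓ N2) inf_le_left)
          (quotAut (1 : G →* AddAut (fixedSub ρ)) N1 (fun _ _ => rfl))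
          (quotAut (1 : G →* AddAut (fixedSub ρ)) (N1 ⊓ N2) (fun _ _ => rfl))
          (fun q => quotAut_comp_quotMap (1 : G →* AddAut (fixedSub ρ)) N1 (N1 ⊓ N2)
            inf_le_left (fun _ _ => rfl) q) (m + 1) a with ha3def
        set cc := delta (fixedSub ρ) (quotAut ρ (N1 ⊓ N2) hρ3)
          (quotAut 1 (N1 ⊓ N2) (fun _ _ => rfl))
          (quotAut (quotModAut ρ (fixedSub ρ) (fixedSub_stab ρ)) (N1 ⊓ N2) hB3)
          (hA_lvl ρ (N1 ⊓ N2) hρ3) (hB_lvl ρ (N1 ⊓ N2) hρ3) m b3 - a3 with hccdef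
        have hcc0 : cohMap (QuotientGroup.mk' (N1 ⊓ N2))
            (quotAut (1 : G →* AddAut (fixedSub ρ)) (N1 ⊓ N2) (fun _ _ => rfl))
            (1 : G →* AddAut (fixedSub ρ)) (fun _ => rfl) (m + 1) cc = 0 := by
          rw [hccdef, map_sub]
          have hcm := delta_cohMap (fixedSub ρ) (quotAut ρ (N1 ⊓ N2) hρ3)
            (quotAut 1 (N1 ⊓ N2) (fun _ _ => rfl))
            (quotAut (quotModAut ρ (fixedSub ρ) (fixedSub_stab ρ)) (N1 ⊓ N2) hB3)
            (hA_lvl ρ (N1 ⊓ N2) hρ3) (hB_lvl ρ (N1 ⊓ N2) hρ3)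
            (QuotientGroup.mk' (N1 ⊓ N2)) ρ (1 : G →* AddAut (fixedSub ρ))
            (quotModAut ρ (fixedSub ρ) (fixedSub_stab ρ)) hA_G hB_G
            (fun _ => rfl) (fun _ => rfl) (fun _ => rfl) m b3
          rw [← hcm, hb3def,
            cohMap_push (quotModAut ρ (fixedSub ρ) (fixedSub_stab ρ)) N2 (N1 ⊓ N2)
              inf_le_right hB2 hB3 m b', hb', hb, ha3def,
            cohMap_push (1 : G →* AddAut (fixedSub ρ)) N1 (N1 ⊓ N2) inf_le_left
              (fun _ _ => rfl) (fun _ _ => rfl) (m + 1) a, sub_self]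
        obtain ⟨N4, hN4n, hN4idx, hle4, hkill4⟩ :=
          (hIsoA (m + 1)).2 (N1 ⊓ N2) hL3n hL3idx (fun _ _ => rfl) cc hcc0
        haveI := hN4n
        have hρ4 : ∀ y ∈ N4, ρ y = 1 := fun y hy => hρ3 y (hle4 hy)
        have hB4 : ∀ y ∈ N4, quotModAut ρ (fixedSub ρ) (fixedSub_stab ρ) y = 1 :=
          fun y hy => hB3 y (hle4 hy)
        have hle40 : N4 ≤ N0 := (hle4.trans inf_le_left).trans hle1
        refine ⟨N4, hN4n, hN4idx, hle40, ?_⟩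
        -- a at N4 equals delta at N4 of b3 at N4
        have hkill4' : cohMap (quotMapHom (N1 ⊓ N2) N4 hle4)
            (quotAut (1 : G →* AddAut (fixedSub ρ)) (N1 ⊓ N2) (fun _ _ => rfl))
            (quotAut (1 : G →* AddAut (fixedSub ρ)) N4 (fun _ _ => rfl))
            (fun q => quotAut_comp_quotMap (1 : G →* AddAut (fixedSub ρ)) (N1 ⊓ N2) N4
              hle4 (fun _ _ => rfl) q) (m + 1) cc = 0 := hkill4
        rw [hccdef, map_sub, sub_eq_zero] at hkill4'
        -- push the identity i a = z1 down to N4 and conclude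
        have e1 : cohMap (quotMapHom N0 N4 hle40) (quotAut ρ N0 h1)
            (quotAut ρ N4 (fun g hg => h1 g (hle40 hg)))
            (fun q => quotAut_comp_quotMap ρ N0 N4 hle40 h1 q) (m + 1) z
            = cohMap (quotMapHom N1 N4 (hle4.trans inf_le_left)) (quotAut ρ N1 hρ1)
              (quotAut ρ N4 hρ4)
              (fun q => quotAut_comp_quotMap ρ N1 N4 (hle4.trans inf_le_left) hρ1 q)
              (m + 1) z1 := by
          rw [hz1def, cohMap_push2 ρ N0 N1 N4 hle1 (hle4.trans inf_le_left) h1 hρ1 hρ4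
            (m + 1) z]
        rw [e1, ← ha, ← coefCohMap_cohMap (quotMapHom N1 N4 (hle4.trans inf_le_left))
          (fixedSub ρ).subtype
          (quotAut (1 : G →* AddAut (fixedSub ρ)) N1 (fun _ _ => rfl)) (quotAut ρ N1 hρ1)
          (quotAut (1 : G →* AddAut (fixedSub ρ)) N4 (fun _ _ => rfl)) (quotAut ρ N4 hρ4)
          (fun q => quotAut_comp_quotMap (1 : G →* AddAut (fixedSub ρ)) N1 N4
            (hle4.trans inf_le_left) (fun _ _ => rfl) q)
          (fun q => quotAut_comp_quotMap ρ N1 N4 (hle4.trans inf_le_left) hρ1 q)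
          (hA_lvl ρ N1 hρ1) (hA_lvl ρ N4 hρ4) (m + 1) a]
        -- now the inner term is a pushed to N4 via N1; rewrite it via a3 and hkill4'
        have e2 : cohMap (quotMapHom N1 N4 (hle4.trans inf_le_left))
            (quotAut (1 : G →* AddAut (fixedSub ρ)) N1 (fun _ _ => rfl))
            (quotAut (1 : G →* AddAut (fixedSub ρ)) N4 (fun _ _ => rfl))
            (fun q => quotAut_comp_quotMap (1 : G →* AddAut (fixedSub ρ)) N1 N4
              (hle4.trans inf_le_left) (fun _ _ => rfl) q) (m + 1) a
            = cohMap (quotMapHom (N1 ⊓ N2) N4 hle4)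
              (quotAut (1 : G →* AddAut (fixedSub ρ)) (N1 ⊓ N2) (fun _ _ => rfl))
              (quotAut (1 : G →* AddAut (fixedSub ρ)) N4 (fun _ _ => rfl))
              (fun q => quotAut_comp_quotMap (1 : G →* AddAut (fixedSub ρ)) (N1 ⊓ N2) N4
                hle4 (fun _ _ => rfl) q) (m + 1) a3 := by
          rw [ha3def, cohMap_push2 (1 : G →* AddAut (fixedSub ρ)) N1 (N1 ⊓ N2) N4
            inf_le_left hle4 (fun _ _ => rfl) (fun _ _ => rfl) (fun _ _ => rfl) (m + 1) a]
        rw [e2, ← hkill4']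
        -- now: i_{N4} (push of delta_{N1⊓N2} b3) = i_{N4} (delta_{N4} (push b3)) = 0
        have hcm2 := delta_cohMap (fixedSub ρ) (quotAut ρ (N1 ⊓ N2) hρ3)
          (quotAut 1 (N1 ⊓ N2) (fun _ _ => rfl))
          (quotAut (quotModAut ρ (fixedSub ρ) (fixedSub_stab ρ)) (N1 ⊓ N2) hB3)
          (hA_lvl ρ (N1 ⊓ N2) hρ3) (hB_lvl ρ (N1 ⊓ N2) hρ3)
          (quotMapHom (N1 ⊓ N2) N4 hle4) (quotAut ρ N4 hρ4)
          (quotAut 1 N4 (fun _ _ => rfl))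
          (quotAut (quotModAut ρ (fixedSub ρ) (fixedSub_stab ρ)) N4 hB4)
          (hA_lvl ρ N4 hρ4) (hB_lvl ρ N4 hρ4)
          (fun q => quotAut_comp_quotMap ρ (N1 ⊓ N2) N4 hle4 hρ3 q)
          (fun q => quotAut_comp_quotMap (1 : G →* AddAut (fixedSub ρ)) (N1 ⊓ N2) N4 hle4
            (fun _ _ => rfl) q)
          (fun q => quotAut_comp_quotMap _ (N1 ⊓ N2) N4 hle4 hB3 q) m b3
        rw [← hcm2]
        exact coefCohMap_delta (fixedSub ρ) (quotAut ρ N4 hρ4)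
          (quotAut 1 N4 (fun _ _ => rfl))
          (quotAut (quotModAut ρ (fixedSub ρ) (fixedSub_stab ρ)) N4 hB4)
          (hA_lvl ρ N4 hρ4) (hB_lvl ρ N4 hρ4) m
          (cohMap (quotMapHom (N1 ⊓ N2) N4 hle4)
            (quotAut (quotModAut ρ (fixedSub ρ) (fixedSub_stab ρ)) (N1 ⊓ N2) hB3)
            (quotAut (quotModAut ρ (fixedSub ρ) (fixedSub_stab ρ)) N4 hB4)
            (fun q => quotAut_comp_quotMap _ (N1 ⊓ N2) N4 hle4 hB3 q) m b3)

end Pieces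
/-- Proposition 2.2: `G ∈ 𝒢(p)` iff for every finite abelian `p`-group `M` regarded as a
trivial module, the canonical map `H^*(Ĝ_p, M) → H^*(G, M)` is an isomorphism in every
degree. -/
theorem mem_Gp_iff_trivial_modules (p : ℕ) (hp : p.Prime) (G : Type u) [Group G] :
    InGp p G ↔
      ∀ (M : Type u) [AddCommGroup M], (∃ k, Nat.card M = p ^ k) →
        ProPCompletionCohIso p G M 1 := by
  constructor
  · intro hG M _ hcard
    exact hG M 1 hcard ⟨⊤, inferInstance, ⟨0, by rw [Subgroup.index_top, pow_zero]⟩,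
      fun y _ => rfl⟩
  · intro hTriv
    suffices h : ∀ (c : ℕ) (M : Type u) [AddCommGroup M] (ρ : G →* AddAut M),
        Nat.card M = c → (∃ k, Nat.card M = p ^ k) →
        (∃ N : Subgroup G, N.Normal ∧ (∃ k, N.index = p ^ k) ∧ ∀ y ∈ N, ρ y = 1) →
        ProPCompletionCohIso p G M ρ by
      intro M instM ρ hcard hexists
      exact h (Nat.card M) M ρ rfl hcard hexists
    intro c
    induction c using Nat.strong_induction_on with
    | _ c ih =>
      intro M instM ρ hcardc hpk hexists
      obtain ⟨N, hNn, hNidx, hNtriv⟩ := hexists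
      haveI := hNn
      by_cases hM1 : Nat.card M = 1
      · haveI : Subsingleton M := (Nat.card_eq_one_iff_unique.mp hM1).1
        have hρ1 : ρ = 1 := DFunLike.ext _ _ fun g => AddEquiv.ext fun m =>
          Subsingleton.elim _ _
        rw [hρ1]
        exact hTriv M hpk
      · obtain ⟨k, hk⟩ := hpk
        haveI hfin : Finite M :=
          Nat.finite_of_card_ne_zero (by rw [hk]; exact pow_ne_zero k hp.pos.ne')
        haveI : Fact p.Prime := ⟨hp⟩
        obtain ⟨dN, hdN⟩ := hNidx
        letI mact : MulAction (G ⧸ N) M :=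
          { smul := fun q m => quotAut ρ N hNtriv q m
            one_smul := fun m => by
              show quotAut ρ N hNtriv 1 m = m
              rw [map_one]
              rfl
            mul_smul := fun x y m => by
              show quotAut ρ N hNtriv (x * y) m
                  = quotAut ρ N hNtriv x (quotAut ρ N hNtriv y m)
              rw [map_mul]
              rfl }
        have hQp : IsPGroup p (G ⧸ N) :=
          IsPGroup.of_card (n := dN) (by rw [← Subgroup.index_eq_card, hdN])
        have hmod := hQp.card_modEq_card_fixedPoints M
        have hfixeq : Nat.card (MulAction.fixedPoints (G ⧸ N) M)
            = Nat.card (fixedSub ρ) := by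
          refine Nat.card_congr (Equiv.subtypeEquivRight ?_)
          intro m
          constructor
          · intro hm g
            exact hm (QuotientGroup.mk g)
          · intro hm q
            refine QuotientGroup.induction_on q fun g => ?_
            exact hm g
        have hk0 : k ≠ 0 := by
          rintro rfl
          rw [pow_zero] at hk
          exact hM1 hk
        have hpM : p ∣ Nat.card M := by
          rw [hk]
          exact dvd_pow_self p hk0
        have hpA : p ∣ Nat.card (fixedSub ρ) := by
          have h0 : Nat.card (fixedSub ρ) ≡ 0 [MOD p] := by
            calc Nat.card (fixedSub ρ)
                = Nat.card (MulAction.fixedPoints (G ⧸ N) M) := hfixeq.symm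
              _ ≡ Nat.card M [MOD p] := hmod.symm
              _ ≡ 0 [MOD p] := Nat.modEq_zero_iff_dvd.mpr hpM
          exact Nat.modEq_zero_iff_dvd.mp h0
        have hMeq : Nat.card M = Nat.card (M ⧸ fixedSub ρ) * Nat.card (fixedSub ρ) :=
          AddSubgroup.card_eq_card_quotient_mul_card_addSubgroup _
        have hApos : 1 < Nat.card (fixedSub ρ) :=
          lt_of_lt_of_le hp.one_lt (Nat.le_of_dvd Nat.card_pos hpA)
        have hBpos : 0 < Nat.card (M ⧸ fixedSub ρ) := Nat.card_pos
        have hBlt : Nat.card (M ⧸ fixedSub ρ) < c := by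
          rw [← hcardc]
          calc Nat.card (M ⧸ fixedSub ρ)
              < Nat.card (M ⧸ fixedSub ρ) * Nat.card (fixedSub ρ) :=
                (Nat.lt_mul_iff_one_lt_right hBpos).mpr hApos
            _ = Nat.card M := hMeq.symm
        have hAdvd : Nat.card (fixedSub ρ) ∣ Nat.card M :=
          ⟨Nat.card (M ⧸ fixedSub ρ), by rw [hMeq, mul_comm]⟩
        have hBdvd : Nat.card (M ⧸ fixedSub ρ) ∣ Nat.card M :=
          ⟨Nat.card (fixedSub ρ), hMeq⟩
        rw [hk] at hAdvd hBdvd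
        have hApow : ∃ j, Nat.card (fixedSub ρ) = p ^ j := by
          obtain ⟨j, _, hj⟩ := (Nat.dvd_prime_pow hp).mp hAdvd
          exact ⟨j, hj⟩
        have hBpow : ∃ j, Nat.card (M ⧸ fixedSub ρ) = p ^ j := by
          obtain ⟨j, _, hj⟩ := (Nat.dvd_prime_pow hp).mp hBdvd
          exact ⟨j, hj⟩
        have hIsoA : ProPCompletionCohIso p G (fixedSub ρ) 1 := hTriv (fixedSub ρ) hApow
        have hIsoB : ProPCompletionCohIso p G (M ⧸ fixedSub ρ)
            (quotModAut ρ (fixedSub ρ) (fixedSub_stab ρ)) :=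
          ih (Nat.card (M ⧸ fixedSub ρ)) hBlt (M ⧸ fixedSub ρ)
            (quotModAut ρ (fixedSub ρ) (fixedSub_stab ρ)) rfl hBpow
            ⟨N, hNn, ⟨dN, hdN⟩,
              fun y hy => quotModAut_triv ρ (fixedSub ρ) (fixedSub_stab ρ) y (hNtriv y hy)⟩
        exact iso_of_pieces p hp ρ N ⟨dN, hdN⟩ hNtriv hIsoA hIsoB

end GoodProfinite
end

section
/- The class ℱ𝒮 of groups having only finitely many subgroups of each finite index is closed under group extensions: if 1 → N → G → Q → 1 is a short exact sequence of groups with N and Q in ℱ𝒮, then G is in ℱ𝒮. -/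
/-!
Common definitions for formalizing "Cohomology and profinite topologies for solvable
groups of finite rank" (K. Lorensen).

Group cohomology is defined via inhomogeneous cochains.  The continuous cohomology of the
pro-`p` (resp. profinite) completion of `G` with coefficients in a finite discrete module is
the direct limit, over the normal subgroups `N` of finite `p`-power (resp. finite) index
acting trivially on the module, of the cohomology of the quotients `G ⧸ N`; accordingly, the
statement that the completion map induces an isomorphism on cohomology is rendered as:
the canonical (inflation) maps from this directed system to `H^*(G, M)` are jointly
surjective, and any class of the system killed in `H^*(G, M)` is killed at a deeper level of
the system.
-/

open Function TensorProduct

universe u v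

namespace GoodProfinite

variable {G H : Type u} {M : Type v}

/-- The multiplicative group structure on `AddAut M` (composition), as in older Mathlib. -/
instance addAutGroupOld (A : Type*) [Add A] : Group (AddAut A) where
  mul g h := AddEquiv.trans h g
  one := AddEquiv.refl _
  inv := AddEquiv.symm
  mul_assoc _ _ _ := rfl
  one_mul _ := rfl
  mul_one _ := rfl
  inv_mul_cancel := AddEquiv.self_trans_symm

lemma finite_setOf_index_dvd {G₀ : Type u} [Group G₀] (h : InFS G₀) {n : ℕ} (hn : n ≠ 0) :
    {H : Subgroup G₀ | H.index ∣ n}.Finite := by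
  have he : {H : Subgroup G₀ | H.index ∣ n} = ⋃ d ∈ (n.divisors : Set ℕ), {H | H.index = d} := by
    ext H
    simp only [Set.mem_setOf_eq, Set.mem_iUnion, Finset.mem_coe, Nat.mem_divisors, exists_prop]
    exact ⟨fun hd => ⟨H.index, ⟨hd, hn⟩, rfl⟩, fun ⟨d, ⟨hd, _⟩, hd'⟩ => hd' ▸ hd⟩
  rw [he]
  exact Set.Finite.biUnion (Finset.finite_toSet _) fun d hd =>
    h d (Nat.pos_of_mem_divisors (Finset.mem_coe.mp hd)).ne'

lemma InFS_of_normal {G₀ : Type u} [Group G₀]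
    (h : ∀ n : ℕ, n ≠ 0 → {K : Subgroup G₀ | K.Normal ∧ K.index = n}.Finite) : InFS G₀ := by
  intro n hn
  have h𝒩 : {K : Subgroup G₀ | K.Normal ∧ K.index ≠ 0 ∧ K.index ≤ n.factorial}.Finite := by
    refine Set.Finite.subset (Set.Finite.biUnion
      (Finset.finite_toSet (Finset.Icc 1 n.factorial)) fun m hm => h m ?_) ?_
    · have := Finset.mem_Icc.mp (Finset.mem_coe.mp hm); omega
    · rintro K ⟨hK1, hK2, hK3⟩
      exact Set.mem_biUnion (Finset.mem_coe.mpr (Finset.mem_Icc.mpr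
        ⟨Nat.one_le_iff_ne_zero.mpr hK2, hK3⟩)) ⟨hK1, rfl⟩
  have hsub : {H : Subgroup G₀ | H.index = n} ⊆
      ⋃ K ∈ {K : Subgroup G₀ | K.Normal ∧ K.index ≠ 0 ∧ K.index ≤ n.factorial},
        {H : Subgroup G₀ | K ≤ H} := by
    intro H hH
    have hHi : H.index = n := hH
    haveI : H.FiniteIndex := ⟨hHi ▸ hn⟩
    have hb : H.normalCore.index ≤ n.factorial := by
      classical
      haveI := Fintype.ofFinite (G₀ ⧸ H)
      rw [Subgroup.normalCore_eq_ker, Subgroup.index_ker]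
      calc Nat.card (MulAction.toPermHom G₀ (G₀ ⧸ H)).range
          ≤ Nat.card (Equiv.Perm (G₀ ⧸ H)) :=
            Nat.card_le_card_of_injective _ Subtype.coe_injective
        _ = (Nat.card (G₀ ⧸ H)).factorial := by
            rw [Nat.card_eq_fintype_card, Nat.card_eq_fintype_card, Fintype.card_perm]
        _ ≤ n.factorial := by rw [← Subgroup.index_eq_card, hHi]
    exact Set.mem_biUnion
      (show H.normalCore ∈ _ from ⟨H.normalCore_normal,
        (inferInstance : H.normalCore.FiniteIndex).index_ne_zero, hb⟩)
      H.normalCore_le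
  refine (Set.Finite.biUnion h𝒩 fun K hK => ?_).subset hsub
  haveI : K.Normal := hK.1
  haveI : K.FiniteIndex := ⟨hK.2.1⟩
  haveI : Finite (Subgroup (G₀ ⧸ K)) :=
    Finite.of_injective (fun H : Subgroup (G₀ ⧸ K) => (H : Set (G₀ ⧸ K))) SetLike.coe_injective
  refine Set.Finite.of_finite_image (f := fun H => H.map (QuotientGroup.mk' K))
    (Set.toFinite _) ?_
  intro H₁ h₁ H₂ h₂ he
  have hc := congrArg (Subgroup.comap (QuotientGroup.mk' K)) he
  rwa [Subgroup.comap_map_eq, Subgroup.comap_map_eq, QuotientGroup.ker_mk',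
    sup_of_le_left h₁, sup_of_le_left h₂] at hc


section Fiber

variable {G₀ Q₀ : Type u} [Group G₀] [Group Q₀]

lemma fiberCode_mk_eq (π : G₀ →* Q₀) {K₁ K₂ : Subgroup G₀} (hK₁ : K₁.Normal)
    (hA : K₂ ⊓ π.ker = K₁ ⊓ π.ker) {q : Q₀} {k₁ k₁' k₂ k₂' : G₀}
    (m₁ : k₁ ∈ K₁) (m₁' : k₁' ∈ K₁) (m₂ : k₂ ∈ K₂) (m₂' : k₂' ∈ K₂)
    (e₁ : π k₁ = q) (e₁' : π k₁' = q) (e₂ : π k₂ = q) (e₂' : π k₂' = q)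
    (w : k₁ * k₂⁻¹ ∈ π.ker) (w' : k₁' * k₂'⁻¹ ∈ π.ker) :
    (QuotientGroup.mk ⟨k₁ * k₂⁻¹, w⟩ :
      ↥π.ker ⧸ (K₁ ⊓ π.ker).subgroupOf π.ker) = QuotientGroup.mk ⟨k₁' * k₂'⁻¹, w'⟩ := by
  rw [QuotientGroup.eq, Subgroup.mem_subgroupOf]
  have hnorm : (K₁ ⊓ π.ker).Normal := by
    constructor
    intro x hx g
    obtain ⟨hx1, hx2⟩ := Subgroup.mem_inf.mp hx
    exact Subgroup.mem_inf.mpr ⟨hK₁.conj_mem x hx1 g, (MonoidHom.normal_ker π).conj_mem x hx2 g⟩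
  have ha : k₁⁻¹ * k₁' ∈ K₁ ⊓ π.ker := Subgroup.mem_inf.mpr
    ⟨mul_mem (inv_mem m₁) m₁', by simp [MonoidHom.mem_ker, e₁, e₁']⟩
  have hb : k₂ * k₂'⁻¹ ∈ K₁ ⊓ π.ker := by
    rw [← hA]
    exact Subgroup.mem_inf.mpr
      ⟨mul_mem m₂ (inv_mem m₂'), by simp [MonoidHom.mem_ker, e₂, e₂']⟩
  have h6 : (k₁ * k₂⁻¹)⁻¹ * (k₁' * k₂'⁻¹) ∈ K₁ ⊓ π.ker := by
    have key : (k₁ * k₂⁻¹)⁻¹ * (k₁' * k₂'⁻¹) =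
        (k₂ * (k₁⁻¹ * k₁') * k₂⁻¹) * (k₂ * k₂'⁻¹) := by group
    rw [key]
    exact mul_mem (hnorm.conj_mem _ ha k₂) hb
  exact h6

open Classical in
noncomputable def fiberCode (π : G₀ →* Q₀) (K₁ K₂ : Subgroup G₀) (q : Q₀) :
    Option (↥π.ker ⧸ (K₁ ⊓ π.ker).subgroupOf π.ker) :=
  if h : ∃ x : G₀ × G₀, x.1 ∈ K₁ ∧ x.2 ∈ K₂ ∧ π x.1 = q ∧ π x.2 = q then
    some (QuotientGroup.mk ⟨h.choose.1 * h.choose.2⁻¹, by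
      have hs := h.choose_spec
      simp only [MonoidHom.mem_ker, map_mul, map_inv, hs.2.2.1, hs.2.2.2, mul_inv_cancel]⟩)
  else none

lemma fiberCode_eq_some (π : G₀ →* Q₀) {K₁ K₂ : Subgroup G₀} (hK₁ : K₁.Normal)
    (hA : K₂ ⊓ π.ker = K₁ ⊓ π.ker) {q : Q₀} {k₁ k₂ : G₀}
    (m₁ : k₁ ∈ K₁) (m₂ : k₂ ∈ K₂) (e₁ : π k₁ = q) (e₂ : π k₂ = q)
    (w : k₁ * k₂⁻¹ ∈ π.ker) :
    fiberCode π K₁ K₂ q = some (QuotientGroup.mk ⟨k₁ * k₂⁻¹, w⟩) := by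
  have h : ∃ x : G₀ × G₀, x.1 ∈ K₁ ∧ x.2 ∈ K₂ ∧ π x.1 = q ∧ π x.2 = q :=
    ⟨(k₁, k₂), m₁, m₂, e₁, e₂⟩
  unfold fiberCode
  rw [dif_pos h]
  exact congrArg some (fiberCode_mk_eq π hK₁ hA h.choose_spec.1 m₁ h.choose_spec.2.1 m₂
    h.choose_spec.2.2.1 e₁ h.choose_spec.2.2.2 e₂ _ w)

lemma fiberCode_exists_of_eq_some (π : G₀ →* Q₀) (K₁ K₂ : Subgroup G₀) {q : Q₀}
    {x : ↥π.ker ⧸ (K₁ ⊓ π.ker).subgroupOf π.ker}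
    (h : fiberCode π K₁ K₂ q = some x) :
    ∃ k₁ k₂, k₁ ∈ K₁ ∧ k₂ ∈ K₂ ∧ π k₁ = q ∧ π k₂ = q ∧
      ∃ w : k₁ * k₂⁻¹ ∈ π.ker, x = QuotientGroup.mk ⟨k₁ * k₂⁻¹, w⟩ := by
  unfold fiberCode at h
  by_cases hc : ∃ y : G₀ × G₀, y.1 ∈ K₁ ∧ y.2 ∈ K₂ ∧ π y.1 = q ∧ π y.2 = q
  · rw [dif_pos hc] at h
    obtain ⟨h1, h2, h3, h4⟩ := hc.choose_spec
    refine ⟨hc.choose.1, hc.choose.2, h1, h2, h3, h4,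
      by simp only [MonoidHom.mem_ker, map_mul, map_inv, h3, h4, mul_inv_cancel],
      (Option.some_injective _ h).symm⟩
  · rw [dif_neg hc] at h
    exact absurd h (by simp)

lemma fiberCode_invariant (π : G₀ →* Q₀) {K₁ K₂ : Subgroup G₀} (hK₁ : K₁.Normal)
    (hA : K₂ ⊓ π.ker = K₁ ⊓ π.ker) {k : G₀} (hk₁ : k ∈ K₁) (hk₂ : k ∈ K₂) (q : Q₀) :
    fiberCode π K₁ K₂ (q * π k) = fiberCode π K₁ K₂ q := by
  by_cases h : ∃ x : G₀ × G₀, x.1 ∈ K₁ ∧ x.2 ∈ K₂ ∧ π x.1 = q ∧ π x.2 = q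
  · obtain ⟨w₁m, w₂m, w₁e, w₂e⟩ := h.choose_spec
    have wk : h.choose.1 * h.choose.2⁻¹ ∈ π.ker := by
      simp only [MonoidHom.mem_ker, map_mul, map_inv, w₁e, w₂e, mul_inv_cancel]
    have wk' : (h.choose.1 * k) * (h.choose.2 * k)⁻¹ ∈ π.ker := by
      simp only [MonoidHom.mem_ker, map_mul, map_inv, w₁e, w₂e]
      group
    rw [fiberCode_eq_some π hK₁ hA (mul_mem w₁m hk₁) (mul_mem w₂m hk₂)
      (by rw [map_mul, w₁e]) (by rw [map_mul, w₂e]) wk',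
      fiberCode_eq_some π hK₁ hA w₁m w₂m w₁e w₂e wk]
    exact congrArg some (congrArg QuotientGroup.mk (Subtype.ext (by group)))
  · have h' : ¬ ∃ x : G₀ × G₀, x.1 ∈ K₁ ∧ x.2 ∈ K₂ ∧ π x.1 = q * π k ∧ π x.2 = q * π k := by
      rintro ⟨y, hy1, hy2, hy3, hy4⟩
      exact h ⟨(y.1 * k⁻¹, y.2 * k⁻¹), mul_mem hy1 (inv_mem hk₁), mul_mem hy2 (inv_mem hk₂),
        by rw [map_mul, map_inv, hy3, mul_inv_cancel_right],
        by rw [map_mul, map_inv, hy4, mul_inv_cancel_right]⟩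
    unfold fiberCode
    rw [dif_neg h, dif_neg h']

lemma le_of_fiberCode_eq (π : G₀ →* Q₀) {K₁ K₂ K₂' : Subgroup G₀} (hK₁ : K₁.Normal)
    (hA : K₂ ⊓ π.ker = K₁ ⊓ π.ker) (hA' : K₂' ⊓ π.ker = K₁ ⊓ π.ker)
    (hB : K₂.map π = K₁.map π)
    (hc : fiberCode π K₁ K₂ = fiberCode π K₁ K₂') : K₂ ≤ K₂' := by
  intro g hg
  have hq : π g ∈ K₁.map π := hB ▸ Subgroup.mem_map_of_mem π hg
  obtain ⟨k₁, m₁, e₁⟩ := Subgroup.mem_map.mp hq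
  have w : k₁ * g⁻¹ ∈ π.ker := by
    simp only [MonoidHom.mem_ker, map_mul, map_inv, e₁, mul_inv_cancel]
  have h2 : fiberCode π K₁ K₂' (π g) = some (QuotientGroup.mk ⟨k₁ * g⁻¹, w⟩) := by
    rw [← hc]
    exact fiberCode_eq_some π hK₁ hA m₁ hg e₁ rfl w
  obtain ⟨v₁, v₂, mv₁, mv₂, ev₁, ev₂, w', hx⟩ := fiberCode_exists_of_eq_some π K₁ K₂' h2
  have wv : k₁ * v₂⁻¹ ∈ π.ker := by
    simp only [MonoidHom.mem_ker, map_mul, map_inv, e₁, ev₂, mul_inv_cancel]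
  have h3 : (QuotientGroup.mk ⟨v₁ * v₂⁻¹, w'⟩ :
      ↥π.ker ⧸ (K₁ ⊓ π.ker).subgroupOf π.ker) = QuotientGroup.mk ⟨k₁ * v₂⁻¹, wv⟩ :=
    fiberCode_mk_eq π hK₁ hA' mv₁ m₁ mv₂ mv₂ ev₁ e₁ ev₂ ev₂ w' wv
  have h4 := hx.trans h3
  rw [QuotientGroup.eq, Subgroup.mem_subgroupOf] at h4
  have h6 : (k₁ * g⁻¹)⁻¹ * (k₁ * v₂⁻¹) ∈ K₁ ⊓ π.ker := h4
  have e6 : (k₁ * g⁻¹)⁻¹ * (k₁ * v₂⁻¹) = g * v₂⁻¹ := by group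
  rw [e6, ← hA'] at h6
  have h7 : g * v₂⁻¹ ∈ K₂' := (Subgroup.mem_inf.mp h6).1
  have e7 : g = (g * v₂⁻¹) * v₂ := by group
  rw [e7]
  exact mul_mem h7 mv₂


lemma fiber_finite (π : G₀ →* Q₀) (hπ : Surjective π) (hQ : InFS Q₀) {n : ℕ} (hn : n ≠ 0)
    (K₁ : Subgroup G₀) (hK₁ : K₁.Normal) (hK₁i : K₁.index = n) :
    {K₂ : Subgroup G₀ | K₂.Normal ∧ K₂.index = n ∧ K₂ ⊓ π.ker = K₁ ⊓ π.ker ∧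
      K₂.map π = K₁.map π}.Finite := by
  haveI : ((K₁ ⊓ π.ker).subgroupOf π.ker).FiniteIndex := by
    constructor
    have h1 : ((K₁ ⊓ π.ker).subgroupOf π.ker).index = (K₁ ⊓ π.ker).relIndex π.ker := rfl
    rw [h1, Subgroup.inf_relIndex_right]
    haveI := hK₁
    have h2 : K₁.relIndex π.ker ∣ n := hK₁i ▸ Subgroup.relIndex_dvd_index_of_normal K₁ π.ker
    exact fun h0 => hn (Nat.eq_zero_of_zero_dvd (h0 ▸ h2))
  haveI : Finite (↥π.ker ⧸ (K₁ ⊓ π.ker).subgroupOf π.ker) :=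
    Subgroup.finite_quotient_of_finiteIndex
  haveI : Finite (Option (↥π.ker ⧸ (K₁ ⊓ π.ker).subgroupOf π.ker)) :=
    Finite.of_equiv _ (Equiv.optionEquivSumPUnit.{0, u} _).symm
  have hD : {D : Subgroup Q₀ | D.index ∣ n * n}.Finite :=
    finite_setOf_index_dvd hQ (Nat.mul_ne_zero hn hn)
  have hGfin : (⋃ D ∈ {D : Subgroup Q₀ | D.index ∣ n * n},
      {f : Q₀ → Option (↥π.ker ⧸ (K₁ ⊓ π.ker).subgroupOf π.ker) |
        ∀ q : Q₀, ∀ d ∈ D, f (q * d) = f q}).Finite := by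
    refine Set.Finite.biUnion hD fun D hD' => ?_
    haveI : D.FiniteIndex :=
      ⟨fun h0 => (Nat.mul_ne_zero hn hn) (Nat.eq_zero_of_zero_dvd (h0 ▸ hD'))⟩
    haveI : Finite (Q₀ ⧸ D) := Subgroup.finite_quotient_of_finiteIndex
    refine (Set.finite_range (fun g : Q₀ ⧸ D → Option (↥π.ker ⧸ (K₁ ⊓ π.ker).subgroupOf π.ker)
      => g ∘ QuotientGroup.mk)).subset ?_
    intro f hf
    refine ⟨fun z => f z.out, funext fun q => ?_⟩
    have hd : q⁻¹ * ((QuotientGroup.mk q : Q₀ ⧸ D).out) ∈ D :=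
      QuotientGroup.eq.mp (QuotientGroup.out_eq' _).symm
    have he : (QuotientGroup.mk q : Q₀ ⧸ D).out =
        q * (q⁻¹ * (QuotientGroup.mk q : Q₀ ⧸ D).out) := by group
    show f (QuotientGroup.mk q : Q₀ ⧸ D).out = f q
    rw [he]
    exact hf q _ hd
  refine Set.Finite.of_finite_image (f := fiberCode π K₁) (hGfin.subset ?_) ?_
  · rintro _ ⟨K₂, ⟨hK₂n, hK₂i, hA, hB⟩, rfl⟩
    refine Set.mem_biUnion (show ((K₁ ⊓ K₂).map π).index ∣ n * n from ?_) ?_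
    · have hdvd1 : ((K₁ ⊓ K₂).map π).index ∣ (K₁ ⊓ K₂).index := (K₁ ⊓ K₂).index_map_dvd hπ
      refine hdvd1.trans ?_
      have e1 : (K₁ ⊓ K₂).relIndex K₁ * K₁.index = (K₁ ⊓ K₂).index :=
        Subgroup.relIndex_mul_index inf_le_left
      have e2 : (K₁ ⊓ K₂).relIndex K₁ = K₂.relIndex K₁ := Subgroup.inf_relIndex_left K₁ K₂
      haveI := hK₂n
      have e3 : K₂.relIndex K₁ ∣ n := hK₂i ▸ Subgroup.relIndex_dvd_index_of_normal K₂ K₁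
      rw [← e1, e2, hK₁i]
      exact mul_dvd_mul e3 dvd_rfl
    · intro q d hd
      obtain ⟨k, hk, rfl⟩ := Subgroup.mem_map.mp hd
      exact fiberCode_invariant π hK₁ hA (Subgroup.mem_inf.mp hk).1 (Subgroup.mem_inf.mp hk).2 q
  · intro K₂ h₂ K₂' h₂' he
    exact le_antisymm (le_of_fiberCode_eq π hK₁ h₂.2.2.1 h₂'.2.2.1 h₂.2.2.2 he)
      (le_of_fiberCode_eq π hK₁ h₂'.2.2.1 h₂.2.2.1 h₂'.2.2.2 he.symm)

end Fiber

lemma normal_finite_of_extension {N₀ G₀ Q₀ : Type u} [Group N₀] [Group G₀] [Group Q₀]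
    (ι : N₀ →* G₀) (π : G₀ →* Q₀) (hπ : Surjective π) (hex : ι.range = π.ker)
    (hN : InFS N₀) (hQ : InFS Q₀) {n : ℕ} (hn : n ≠ 0) :
    {K : Subgroup G₀ | K.Normal ∧ K.index = n}.Finite := by
  have key : ∀ K ∈ {K : Subgroup G₀ | K.Normal ∧ K.index = n},
      (K.comap ι, K.map π) ∈ {A : Subgroup N₀ | A.index ∣ n} ×ˢ {B : Subgroup Q₀ | B.index ∣ n} := by
    rintro K ⟨hKn, hKi⟩
    haveI := hKn
    constructor
    · show (K.comap ι).index ∣ n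
      rw [Subgroup.index_comap]
      exact hKi ▸ Subgroup.relIndex_dvd_index_of_normal K ι.range
    · exact hKi ▸ K.index_map_dvd hπ
  have himg : ((fun K : Subgroup G₀ => (K.comap ι, K.map π)) ''
      {K | K.Normal ∧ K.index = n}).Finite :=
    ((finite_setOf_index_dvd hN hn).prod (finite_setOf_index_dvd hQ hn)).subset
      (by rintro _ ⟨K, hK, rfl⟩; exact key K hK)
  have hsub : {K : Subgroup G₀ | K.Normal ∧ K.index = n} ⊆
      ⋃ p ∈ (fun K : Subgroup G₀ => (K.comap ι, K.map π)) '' {K | K.Normal ∧ K.index = n},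
        {K : Subgroup G₀ | K.Normal ∧ K.index = n ∧ (K.comap ι, K.map π) = p} :=
    fun K hK => Set.mem_biUnion ⟨K, hK, rfl⟩ ⟨hK.1, hK.2, rfl⟩
  refine (Set.Finite.biUnion himg ?_).subset hsub
  rintro p ⟨K₁, ⟨hK₁n, hK₁i⟩, hp⟩
  refine (fiber_finite π hπ hQ hn K₁ hK₁n hK₁i).subset ?_
  rintro K₂ ⟨hK₂n, hK₂i, hpe⟩
  rw [← hp] at hpe
  have hcomap : K₂.comap ι = K₁.comap ι := congrArg Prod.fst hpe
  have hmap : K₂.map π = K₁.map π := congrArg Prod.snd hpe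
  refine ⟨hK₂n, hK₂i, ?_, hmap⟩
  have h1 := congrArg (Subgroup.map ι) hcomap
  rwa [Subgroup.map_comap_eq, Subgroup.map_comap_eq, hex,
    inf_comm π.ker K₂, inf_comm π.ker K₁] at h1


/-- The class `ℱ𝒮` is closed under group extensions. -/
theorem FS_closed_under_extension (N G Q : Type u) [Group N] [Group G] [Group Q]
    (ι : N →* G) (π : G →* Q) (hι : Injective ι) (hπ : Surjective π)
    (hex : ι.range = π.ker) (hN : InFS N) (hQ : InFS Q) : InFS G :=
  InFS_of_normal fun _ hn => normal_finite_of_extension ι π hπ hex hN hQ hn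

end GoodProfinite
end
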